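/- arXiv:1206.1566 — 11 statements merged into one kernel-verified Lean document; each statement's English description precedes it below -/
import Mathlib

section
/- Let α : (Fin n → ZMod 2) → ℝ be a family of real coefficients and set A := Σ_V α V • S V ∈ M. Then A² = 1 if and only if Σ_V (α V)² = 1 and, for every U ∈ (Fin n → ZMod 2) with U ≠ 0, Σ_V α V * α (V + U) = 0. -/
theorem stmt_0 {n : ℕ} (hn : 1 ≤ n) {M : Type*} [Ring M] [Algebra ℝ M]
    (S : (Fin n → ZMod 2) → M)
    (hS0 : S 0 = 1)
    (hSmul : ∀ U V : Fin n → ZMod 2, S (U + V) = S U * S V)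
    (hind : LinearIndependent ℝ S)
    (α : (Fin n → ZMod 2) → ℝ)
    (A : M) (hA : A = ∑ V : Fin n → ZMod 2, α V • S V) :
    A ^ 2 = 1 ↔
      ((∑ V : Fin n → ZMod 2, (α V) ^ 2) = 1 ∧
        ∀ U : Fin n → ZMod 2, U ≠ 0 →
          (∑ V : Fin n → ZMod 2, α V * α (V + U)) = 0) := by
  classical
  have hVV : ∀ V : Fin n → ZMod 2, V + V = 0 := by
    intro V; funext i; exact CharTwo.add_self_eq_zero (V i)
  set c : (Fin n → ZMod 2) → ℝ := fun U => ∑ V : Fin n → ZMod 2, α V * α (V + U) with hc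
  have key : A ^ 2 = ∑ U : Fin n → ZMod 2, c U • S U := by
    rw [hA, sq, Finset.sum_mul_sum]
    have h1 : ∀ V : Fin n → ZMod 2,
        (∑ W : Fin n → ZMod 2, (α V • S V) * (α W • S W))
          = ∑ U : Fin n → ZMod 2, (α V * α (V + U)) • S U := by
      intro V
      refine Fintype.sum_equiv (Equiv.addLeft V) _ _ ?_
      intro U
      have : V + (V + U) = U := by rw [← add_assoc, hVV, zero_add]
      simp only [Equiv.coe_addLeft]
      rw [smul_mul_smul_comm, ← hSmul, this]
    rw [Finset.sum_congr rfl fun V _ => h1 V, Finset.sum_comm]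
    simp only [hc, ← Finset.sum_smul]
  set d : (Fin n → ZMod 2) → ℝ := fun U => if U = 0 then 1 else 0 with hd
  have hone : (1 : M) = ∑ U : Fin n → ZMod 2, d U • S U := by
    rw [hd]
    simp [hS0]
  have hiff : A ^ 2 = 1 ↔ ∀ U, c U = d U := by
    rw [key, hone]
    constructor
    · intro h U
      have := Fintype.linearIndependent_iff.mp hind (fun U => c U - d U) ?_ U
      · linarith
      · simp only [sub_smul, Finset.sum_sub_distrib, h, sub_self]
    · intro h
      exact Finset.sum_congr rfl fun U _ => by rw [h U]
  rw [hiff]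
  have hc0 : c 0 = ∑ V : Fin n → ZMod 2, (α V) ^ 2 := by
    simp [hc, sq]
  constructor
  · intro h
    refine ⟨by rw [← hc0, h 0]; simp [hd], fun U hU => by
      have := h U; simp [hd, hU] at this; exact this⟩
  · intro ⟨h1, h2⟩ U
    by_cases hU : U = 0
    · subst hU; rw [hc0, h1]; simp [hd]
    · simp only [hc]; rw [h2 U hU]; simp [hd, hU]
end

section
/- Let U1, U2, U3, U4 ∈ (Fin n → ZMod 2) be pairwise distinct and let α1, α2, α3, α4 ∈ ℝ be all nonzero, and set A := α1 • S U1 + α2 • S U2 + α3 • S U3 + α4 • S U4. Then A² = 1 if and only if there exist V ∈ (Fin n → ZMod 2) and V1, V2 ∈ (Fin n → ZMod 2) with V1 ≠ V2, V1 ≠ 0, V2 ≠ 0, and a sign ε ∈ {1, −1} such that A = ε • ((1/2) • (S V * (−1 + S V1 + S V2 + S (V1 + V2)))). -/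
theorem stmt_2 {n : ℕ} (hn : 1 ≤ n) {M : Type*} [Ring M] [Algebra ℝ M]
    (S : (Fin n → ZMod 2) → M)
    (hS0 : S 0 = 1)
    (hSmul : ∀ U V : Fin n → ZMod 2, S (U + V) = S U * S V)
    (hind : LinearIndependent ℝ S)
    (U1 U2 U3 U4 : Fin n → ZMod 2)
    (h12 : U1 ≠ U2) (h13 : U1 ≠ U3) (h14 : U1 ≠ U4)
    (h23 : U2 ≠ U3) (h24 : U2 ≠ U4) (h34 : U3 ≠ U4)
    (α1 α2 α3 α4 : ℝ)
    (hα1 : α1 ≠ 0) (hα2 : α2 ≠ 0) (hα3 : α3 ≠ 0) (hα4 : α4 ≠ 0)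
    (A : M) (hA : A = α1 • S U1 + α2 • S U2 + α3 • S U3 + α4 • S U4) :
    A ^ 2 = 1 ↔
      ∃ (V V1 V2 : Fin n → ZMod 2) (ε : ℝ),
        V1 ≠ V2 ∧ V1 ≠ 0 ∧ V2 ≠ 0 ∧ (ε = 1 ∨ ε = -1) ∧
        A = ε • ((1 / 2 : ℝ) • (S V * (-1 + S V1 + S V2 + S (V1 + V2)))) := by
  classical
  have hxx : ∀ x : Fin n → ZMod 2, x + x = 0 := by
    intro x; funext i; exact CharTwo.add_self_eq_zero (x i)
  have hxx' : ∀ x y : Fin n → ZMod 2, x + (x + y) = y := by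
    intro x y; rw [← add_assoc, hxx, zero_add]
  have heq : ∀ a b : Fin n → ZMod 2, a = b ↔ a + b = 0 := by
    intro a b
    constructor
    · rintro rfl; exact hxx a
    · intro h
      have h2 := congrArg (· + b) h
      simpa [add_assoc, hxx] using h2
  have hz : ∀ a b : Fin n → ZMod 2, a ≠ b → a + b ≠ 0 := by
    intro a b hab h; exact hab ((heq a b).mpr h)
  have hne' : ∀ a b c d : Fin n → ZMod 2, a + (b + (c + d)) ≠ 0 → ¬(a + b = c + d) := by
    intro a b c d h h'
    exact h (by rw [← add_assoc]; exact (heq _ _).mp h')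
  have hcomm : ∀ a b : Fin n → ZMod 2, S a * S b = S b * S a := by
    intro a b; rw [← hSmul, ← hSmul, add_comm]
  have hsq : ∀ a : Fin n → ZMod 2, S a * S a = 1 := by
    intro a; rw [← hSmul, hxx, hS0]
  constructor
  · -- forward direction
    intro hA2
    have hAA : A * A = (α1^2+α2^2+α3^2+α4^2) • (1:M) + (2*(α1*α2)) • S (U1+U2)
        + (2*(α1*α3)) • S (U1+U3) + (2*(α1*α4)) • S (U1+U4) + (2*(α2*α3)) • S (U2+U3)
        + (2*(α2*α4)) • S (U2+U4) + (2*(α3*α4)) • S (U3+U4) := by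
      rw [hA]
      simp only [add_mul, mul_add, smul_mul_smul_comm, ← hSmul, hxx, hS0]
      rw [add_comm U2 U1, add_comm U3 U1, add_comm U4 U1, add_comm U3 U2, add_comm U4 U2,
        add_comm U4 U3]
      module
    have h1 : (α1^2+α2^2+α3^2+α4^2) • (1:M) + (2*(α1*α2)) • S (U1+U2)
        + (2*(α1*α3)) • S (U1+U3) + (2*(α1*α4)) • S (U1+U4) + (2*(α2*α3)) • S (U2+U3)
        + (2*(α2*α4)) • S (U2+U4) + (2*(α3*α4)) • S (U3+U4) = 1 := by
      rw [← hAA, ← pow_two, hA2]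
    have hlc : Finsupp.linearCombination ℝ S
        (Finsupp.single (0 : Fin n → ZMod 2) (α1^2+α2^2+α3^2+α4^2 - 1)
          + Finsupp.single (U1+U2) (2*(α1*α2)) + Finsupp.single (U1+U3) (2*(α1*α3))
          + Finsupp.single (U1+U4) (2*(α1*α4)) + Finsupp.single (U2+U3) (2*(α2*α3))
          + Finsupp.single (U2+U4) (2*(α2*α4)) + Finsupp.single (U3+U4) (2*(α3*α4))) = 0 := by
      simp only [map_add, Finsupp.linearCombination_single, hS0]
      linear_combination (norm := module) h1
    have hf0 := linearIndependent_iff.mp hind _ hlc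
    have hev : ∀ w : Fin n → ZMod 2,
        (Finsupp.single (0 : Fin n → ZMod 2) (α1^2+α2^2+α3^2+α4^2 - 1)) w
          + (Finsupp.single (U1+U2) (2*(α1*α2))) w + (Finsupp.single (U1+U3) (2*(α1*α3))) w
          + (Finsupp.single (U1+U4) (2*(α1*α4))) w + (Finsupp.single (U2+U3) (2*(α2*α3))) w
          + (Finsupp.single (U2+U4) (2*(α2*α4))) w + (Finsupp.single (U3+U4) (2*(α3*α4))) w
          = 0 := by
      intro w
      have := DFunLike.congr_fun hf0 w
      simpa [Finsupp.add_apply] using this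
    rcases eq_or_ne (U3 + U4) (U1 + U2) with hsum | hnesum
    · -- main case: U1+U2+U3+U4 = 0
      -- coefficient equations
      have e0 := hev 0
      rw [Finsupp.single_apply, Finsupp.single_apply, Finsupp.single_apply,
        Finsupp.single_apply, Finsupp.single_apply, Finsupp.single_apply,
        Finsupp.single_apply, if_pos rfl, if_neg (hz U1 U2 h12), if_neg (hz U1 U3 h13),
        if_neg (hz U1 U4 h14), if_neg (hz U2 U3 h23), if_neg (hz U2 U4 h24),
        if_neg (hz U3 U4 h34)] at e0
      simp only [add_zero] at e0
      have e12 := hev (U1 + U2)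
      rw [Finsupp.single_apply, Finsupp.single_apply, Finsupp.single_apply,
        Finsupp.single_apply, Finsupp.single_apply, Finsupp.single_apply,
        Finsupp.single_apply,
        if_neg (fun h => hz U1 U2 h12 h.symm), if_pos rfl,
        if_neg (fun h => h23 (add_left_cancel h).symm),
        if_neg (fun h => h24 (add_left_cancel h).symm),
        if_neg (hne' _ _ _ _ (by simpa [add_assoc, add_comm, add_left_comm, hxx, hxx'] using hz U1 U3 h13)),
        if_neg (hne' _ _ _ _ (by simpa [add_assoc, add_comm, add_left_comm, hxx, hxx'] using hz U1 U4 h14)),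
        if_pos hsum] at e12
      simp only [add_zero, zero_add] at e12
      have c24 : U2 + U4 = U1 + U3 := by
        rw [heq]
        have hs0 := (heq _ _).mp hsum
        simp only [add_assoc, add_comm, add_left_comm, hxx, hxx'] at hs0 ⊢
        exact hs0
      have c23 : U2 + U3 = U1 + U4 := by
        rw [heq]
        have hs0 := (heq _ _).mp hsum
        simp only [add_assoc, add_comm, add_left_comm, hxx, hxx'] at hs0 ⊢
        exact hs0
      have e13 := hev (U1 + U3)
      rw [Finsupp.single_apply, Finsupp.single_apply, Finsupp.single_apply,
        Finsupp.single_apply, Finsupp.single_apply, Finsupp.single_apply,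
        Finsupp.single_apply,
        if_neg (fun h => hz U1 U3 h13 h.symm),
        if_neg (fun h => h23 (add_left_cancel h)), if_pos rfl,
        if_neg (fun h => h34 (add_left_cancel h).symm),
        if_neg (hne' _ _ _ _ (by simpa [add_assoc, add_comm, add_left_comm, hxx, hxx'] using hz U1 U2 h12)),
        if_pos c24,
        if_neg (hne' _ _ _ _ (by simpa [add_assoc, add_comm, add_left_comm, hxx, hxx'] using hz U1 U4 h14))] at e13
      simp only [add_zero, zero_add] at e13
      have e14 := hev (U1 + U4)
      rw [Finsupp.single_apply, Finsupp.single_apply, Finsupp.single_apply,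
        Finsupp.single_apply, Finsupp.single_apply, Finsupp.single_apply,
        Finsupp.single_apply,
        if_neg (fun h => hz U1 U4 h14 h.symm),
        if_neg (fun h => h24 (add_left_cancel h)),
        if_neg (fun h => h34 (add_left_cancel h)), if_pos rfl,
        if_pos c23,
        if_neg (hne' _ _ _ _ (by simpa [add_assoc, add_comm, add_left_comm, hxx, hxx'] using hz U1 U2 h12)),
        if_neg (hne' _ _ _ _ (by simpa [add_assoc, add_comm, add_left_comm, hxx, hxx'] using hz U1 U3 h13))] at e14
      simp only [add_zero, zero_add] at e14
      -- derive |αi| = 1/2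
      have s12 : α1^2 = α2^2 := mul_right_cancel₀ (mul_ne_zero hα3 hα4)
        (by linear_combination (α1*α4/2)*e13 - (α2*α4/2)*e14)
      have s13 : α1^2 = α3^2 := mul_right_cancel₀ (mul_ne_zero hα2 hα4)
        (by linear_combination (α1*α2/2)*e14 - (α2*α3/2)*e12)
      have s14 : α1^2 = α4^2 := mul_right_cancel₀ (mul_ne_zero hα2 hα3)
        (by linear_combination (α1*α3/2)*e12 - (α3*α4/2)*e13)
      have q1 : α1^2 = (1/4 : ℝ) := by linear_combination (1/4)*e0 + (1/4)*s12 + (1/4)*s13 + (1/4)*s14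
      have q2 : α2^2 = (1/4 : ℝ) := by linear_combination q1 - s12
      have q3 : α3^2 = (1/4 : ℝ) := by linear_combination q1 - s13
      have q4 : α4^2 = (1/4 : ℝ) := by linear_combination q1 - s14
      have hs : ∀ β : ℝ, β^2 = (1/4:ℝ) → β = 1/2 ∨ β = -(1/2) := by
        intro β hβ
        rcases mul_eq_zero.mp (show (β - 1/2) * (β + 1/2) = 0 by linear_combination hβ) with h | h
        · left; linarith
        · right; linarith
      -- rep lemmas
      have t41 : U1 + (U2 + U3) = U4 := by
        rw [heq]
        have hs0 := (heq _ _).mp hsum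
        simp only [add_assoc, add_comm, add_left_comm, hxx, hxx'] at hs0 ⊢
        exact hs0
      have t42 : U2 + (U1 + U3) = U4 := by
        rw [heq]
        have hs0 := (heq _ _).mp hsum
        simp only [add_assoc, add_comm, add_left_comm, hxx, hxx'] at hs0 ⊢
        exact hs0
      have t43 : U3 + (U1 + U2) = U4 := by
        rw [heq]
        have hs0 := (heq _ _).mp hsum
        simp only [add_assoc, add_comm, add_left_comm, hxx, hxx'] at hs0 ⊢
        exact hs0
      have t34 : U4 + (U1 + U2) = U3 := by
        rw [heq]
        have hs0 := (heq _ _).mp hsum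
        simp only [add_assoc, add_comm, add_left_comm, hxx, hxx'] at hs0 ⊢
        exact hs0
      have targ1 : (U1+U2) + (U1+U3) = U2 + U3 := by
        simp [add_assoc, add_comm, add_left_comm, hxx, hxx']
      have targ2 : (U2+U1) + (U2+U3) = U1 + U3 := by
        simp [add_assoc, add_comm, add_left_comm, hxx, hxx']
      have targ3 : (U3+U1) + (U3+U2) = U1 + U2 := by
        simp [add_assoc, add_comm, add_left_comm, hxx, hxx']
      have targ4 : (U4+U1) + (U4+U2) = U1 + U2 := by
        simp [add_assoc, add_comm, add_left_comm, hxx, hxx']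
      have rep1 : ∀ ε : ℝ, ε • ((1/2 : ℝ) • (S U1 * (-1 + S (U1+U2) + S (U1+U3) + S ((U1+U2) + (U1+U3)))))
          = (-(ε*(1/2))) • S U1 + (ε*(1/2)) • S U2 + (ε*(1/2)) • S U3 + (ε*(1/2)) • S U4 := by
        intro ε
        rw [targ1]
        simp only [mul_add, mul_neg, mul_one, ← hSmul, hxx', t41]
        module
      have rep2 : ∀ ε : ℝ, ε • ((1/2 : ℝ) • (S U2 * (-1 + S (U2+U1) + S (U2+U3) + S ((U2+U1) + (U2+U3)))))
          = (ε*(1/2)) • S U1 + (-(ε*(1/2))) • S U2 + (ε*(1/2)) • S U3 + (ε*(1/2)) • S U4 := by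
        intro ε
        rw [targ2]
        simp only [mul_add, mul_neg, mul_one, ← hSmul, hxx', t42]
        module
      have rep3 : ∀ ε : ℝ, ε • ((1/2 : ℝ) • (S U3 * (-1 + S (U3+U1) + S (U3+U2) + S ((U3+U1) + (U3+U2)))))
          = (ε*(1/2)) • S U1 + (ε*(1/2)) • S U2 + (-(ε*(1/2))) • S U3 + (ε*(1/2)) • S U4 := by
        intro ε
        rw [targ3]
        simp only [mul_add, mul_neg, mul_one, ← hSmul, hxx', t43]
        module
      have rep4 : ∀ ε : ℝ, ε • ((1/2 : ℝ) • (S U4 * (-1 + S (U4+U1) + S (U4+U2) + S ((U4+U1) + (U4+U2)))))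
          = (ε*(1/2)) • S U1 + (ε*(1/2)) • S U2 + (ε*(1/2)) • S U3 + (-(ε*(1/2))) • S U4 := by
        intro ε
        rw [targ4]
        simp only [mul_add, mul_neg, mul_one, ← hSmul, hxx', t34]
        module
      obtain h1 | h1 := hs _ q1 <;> obtain h2 | h2 := hs _ q2 <;>
        obtain h3 | h3 := hs _ q3 <;> obtain h4 | h4 := hs _ q4
      -- 16 cases: ++++
      · exfalso; rw [h1, h2, h3, h4] at e12; norm_num at e12
      -- +++-
      · exact ⟨U4, U4+U1, U4+U2, 1, fun h => h12 (add_left_cancel h),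
          hz U4 U1 (Ne.symm h14), hz U4 U2 (Ne.symm h24), Or.inl rfl,
          by rw [rep4, hA, h1, h2, h3, h4]; module⟩
      -- ++-+
      · exact ⟨U3, U3+U1, U3+U2, 1, fun h => h12 (add_left_cancel h),
          hz U3 U1 (Ne.symm h13), hz U3 U2 (Ne.symm h23), Or.inl rfl,
          by rw [rep3, hA, h1, h2, h3, h4]; module⟩
      -- ++--
      · exfalso; rw [h1, h2, h3, h4] at e12; norm_num at e12
      -- +-++
      · exact ⟨U2, U2+U1, U2+U3, 1, fun h => h13 (add_left_cancel h),
          hz U2 U1 (Ne.symm h12), hz U2 U3 h23, Or.inl rfl,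
          by rw [rep2, hA, h1, h2, h3, h4]; module⟩
      -- +-+-
      · exfalso; rw [h1, h2, h3, h4] at e13; norm_num at e13
      -- +--+
      · exfalso; rw [h1, h2, h3, h4] at e14; norm_num at e14
      -- +---
      · exact ⟨U1, U1+U2, U1+U3, -1, fun h => h23 (add_left_cancel h),
          hz U1 U2 h12, hz U1 U3 h13, Or.inr rfl,
          by rw [rep1, hA, h1, h2, h3, h4]; module⟩
      -- -+++
      · exact ⟨U1, U1+U2, U1+U3, 1, fun h => h23 (add_left_cancel h),
          hz U1 U2 h12, hz U1 U3 h13, Or.inl rfl,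
          by rw [rep1, hA, h1, h2, h3, h4]; module⟩
      -- -++-
      · exfalso; rw [h1, h2, h3, h4] at e14; norm_num at e14
      -- -+-+
      · exfalso; rw [h1, h2, h3, h4] at e13; norm_num at e13
      -- -+--
      · exact ⟨U2, U2+U1, U2+U3, -1, fun h => h13 (add_left_cancel h),
          hz U2 U1 (Ne.symm h12), hz U2 U3 h23, Or.inr rfl,
          by rw [rep2, hA, h1, h2, h3, h4]; module⟩
      -- --++
      · exfalso; rw [h1, h2, h3, h4] at e12; norm_num at e12
      -- --+-
      · exact ⟨U3, U3+U1, U3+U2, -1, fun h => h12 (add_left_cancel h),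
          hz U3 U1 (Ne.symm h13), hz U3 U2 (Ne.symm h23), Or.inr rfl,
          by rw [rep3, hA, h1, h2, h3, h4]; module⟩
      -- ---+
      · exact ⟨U4, U4+U1, U4+U2, -1, fun h => h12 (add_left_cancel h),
          hz U4 U1 (Ne.symm h14), hz U4 U2 (Ne.symm h24), Or.inr rfl,
          by rw [rep4, hA, h1, h2, h3, h4]; module⟩
      -- ----
      · exfalso; rw [h1, h2, h3, h4] at e12; norm_num at e12
    · -- degenerate case: contradiction
      exfalso
      have e12 := hev (U1 + U2)
      rw [Finsupp.single_apply, Finsupp.single_apply, Finsupp.single_apply,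
        Finsupp.single_apply, Finsupp.single_apply, Finsupp.single_apply,
        Finsupp.single_apply,
        if_neg (fun h => hz U1 U2 h12 h.symm), if_pos rfl,
        if_neg (fun h => h23 (add_left_cancel h).symm),
        if_neg (fun h => h24 (add_left_cancel h).symm),
        if_neg (hne' _ _ _ _ (by simpa [add_assoc, add_comm, add_left_comm, hxx, hxx'] using hz U1 U3 h13)),
        if_neg (hne' _ _ _ _ (by simpa [add_assoc, add_comm, add_left_comm, hxx, hxx'] using hz U1 U4 h14)),
        if_neg hnesum] at e12
      simp only [add_zero, zero_add] at e12
      have : α1 * α2 = 0 := by linarith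
      exact mul_ne_zero hα1 hα2 this
  · -- backward direction
    rintro ⟨V, V1, V2, ε, hV12, hV10, hV20, hε, hrep⟩
    have hXV : (-1 + S V1 + S V2 + S (V1 + V2)) * S V
        = S V * (-1 + S V1 + S V2 + S (V1 + V2)) := by
      simp only [add_mul, mul_add, neg_mul, mul_neg, one_mul, mul_one]
      rw [hcomm V1 V, hcomm V2 V, hcomm (V1+V2) V]
    have hXX : (-1 + S V1 + S V2 + S (V1 + V2)) * (-1 + S V1 + S V2 + S (V1 + V2))
        = (4:ℝ) • (1:M) := by
      have a3 : V1 + (V1+V2) = V2 := hxx' V1 V2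
      have a4 : V2 + V1 = V1 + V2 := add_comm _ _
      have a5 : V2 + (V1+V2) = V1 := by rw [add_comm V1 V2]; exact hxx' V2 V1
      have a6 : (V1+V2) + V1 = V2 := by rw [add_comm]; exact a3
      have a7 : (V1+V2) + V2 = V1 := by rw [add_comm]; exact a5
      simp only [mul_add, add_mul, mul_neg, neg_mul, mul_one, one_mul, neg_neg, ← hSmul]
      simp only [hxx, a3, a4, a5, a6, a7, hS0]
      module
    have hBB : (S V * (-1 + S V1 + S V2 + S (V1 + V2))) * (S V * (-1 + S V1 + S V2 + S (V1 + V2)))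
        = (4:ℝ) • (1:M) := by
      rw [mul_assoc, ← mul_assoc (-1 + S V1 + S V2 + S (V1 + V2)) (S V), hXV,
        mul_assoc (S V), ← mul_assoc (S V) (S V), hsq, one_mul, hXX]
    rw [hrep, smul_pow, smul_pow, pow_two (S V * (-1 + S V1 + S V2 + S (V1 + V2))), hBB]
    rcases hε with rfl | rfl <;> · simp [smul_smul]; norm_num
end

section
/- Let U1, U2, U3, U4 ∈ (Fin n → ZMod 2) be pairwise distinct and let α1, α2, α3, α4 ∈ ℝ be all nonzero. If A := α1 • S U1 + α2 • S U2 + α3 • S U3 + α4 • S U4 satisfies A² = 1, then α1² + α2² + α3² + α4² = 1 and U1 + U2 = U3 + U4, U1 + U3 = U2 + U4, and U1 + U4 = U2 + U3. -/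
theorem stmt_4 {n : ℕ} (hn : 1 ≤ n) {M : Type*} [Ring M] [Algebra ℝ M]
    (S : (Fin n → ZMod 2) → M)
    (hS0 : S 0 = 1)
    (hSmul : ∀ U V : Fin n → ZMod 2, S (U + V) = S U * S V)
    (hind : LinearIndependent ℝ S)
    (U1 U2 U3 U4 : Fin n → ZMod 2)
    (h12 : U1 ≠ U2) (h13 : U1 ≠ U3) (h14 : U1 ≠ U4)
    (h23 : U2 ≠ U3) (h24 : U2 ≠ U4) (h34 : U3 ≠ U4)
    (α1 α2 α3 α4 : ℝ)
    (hα1 : α1 ≠ 0) (hα2 : α2 ≠ 0) (hα3 : α3 ≠ 0) (hα4 : α4 ≠ 0)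
    (A : M) (hA : A = α1 • S U1 + α2 • S U2 + α3 • S U3 + α4 • S U4)
    (hA2 : A ^ 2 = 1) :
    α1 ^ 2 + α2 ^ 2 + α3 ^ 2 + α4 ^ 2 = 1 ∧
      U1 + U2 = U3 + U4 ∧ U1 + U3 = U2 + U4 ∧ U1 + U4 = U2 + U3 := by
  -- basic char-2 facts
  have h2 : ∀ x : ZMod 2, x + x = 0 := by decide
  have hadd : ∀ V : Fin n → ZMod 2, V + V = 0 := fun V => funext fun i => h2 (V i)
  have hne0 : ∀ U V : Fin n → ZMod 2, U ≠ V → U + V ≠ 0 := by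
    intro U V hUV h
    apply hUV
    have : V = -U := eq_neg_of_add_eq_zero_right h
    have hneg : -U = U := by
      funext i
      have : ∀ x : ZMod 2, -x = x := by decide
      exact this (U i)
    rw [this, hneg]
  have hsm : ∀ (a b : ℝ) (x y : M), (a • x) * (b • y) = (a * b) • (x * y) := by
    intro a b x y
    rw [smul_mul_assoc, mul_smul_comm, smul_smul]
  have hA2' : A * A = 1 := by rw [← pow_two]; exact hA2
  have expand : A * A = (α1^2+α2^2+α3^2+α4^2) • (1:M)
      + (2*α1*α2) • S (U1+U2) + (2*α1*α3) • S (U1+U3) + (2*α1*α4) • S (U1+U4)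
      + (2*α2*α3) • S (U2+U3) + (2*α2*α4) • S (U2+U4) + (2*α3*α4) • S (U3+U4) := by
    rw [hA]
    simp only [add_mul, mul_add, hsm, ← hSmul, hadd U1, hadd U2, hadd U3, hadd U4, hS0]
    rw [show U2+U1 = U1+U2 from add_comm _ _, show U3+U1 = U1+U3 from add_comm _ _,
      show U4+U1 = U1+U4 from add_comm _ _, show U3+U2 = U2+U3 from add_comm _ _,
      show U4+U2 = U2+U4 from add_comm _ _, show U4+U3 = U3+U4 from add_comm _ _]
    module
  set c : (Fin n → ZMod 2) →₀ ℝ :=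
    Finsupp.single 0 (α1^2+α2^2+α3^2+α4^2-1)
    + Finsupp.single (U1+U2) (2*α1*α2) + Finsupp.single (U1+U3) (2*α1*α3)
    + Finsupp.single (U1+U4) (2*α1*α4) + Finsupp.single (U2+U3) (2*α2*α3)
    + Finsupp.single (U2+U4) (2*α2*α4) + Finsupp.single (U3+U4) (2*α3*α4) with hcdef
  have hc0 : c = 0 := by
    apply linearIndependent_iff.mp hind
    rw [hcdef]
    simp only [map_add, Finsupp.linearCombination_single, hS0]
    rw [show ((α1^2+α2^2+α3^2+α4^2-1) • (1:M)
        + (2*α1*α2) • S (U1+U2) + (2*α1*α3) • S (U1+U3)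
        + (2*α1*α4) • S (U1+U4) + (2*α2*α3) • S (U2+U3)
        + (2*α2*α4) • S (U2+U4) + (2*α3*α4) • S (U3+U4)) = A * A - 1 by
      rw [expand]; module]
    rw [hA2', sub_self]
  -- prove U1 + U2 = U3 + U4
  have hP : U1 + U2 = U3 + U4 := by
    by_contra hP
    have hx := DFunLike.congr_fun hc0 (U1 + U2)
    have e0 : (0 : Fin n → ZMod 2) ≠ U1 + U2 := fun h => hne0 U1 U2 h12 h.symm
    have e13 : U1 + U3 ≠ U1 + U2 := fun h => h23 (add_left_cancel h).symm
    have e14 : U1 + U4 ≠ U1 + U2 := fun h => h24 (add_left_cancel h).symm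
    have e23 : U2 + U3 ≠ U1 + U2 := by
      intro h
      rw [show U1 + U2 = U2 + U1 from add_comm _ _] at h
      exact h13 (add_left_cancel h).symm
    have e24 : U2 + U4 ≠ U1 + U2 := by
      intro h
      rw [show U1 + U2 = U2 + U1 from add_comm _ _] at h
      exact h14 (add_left_cancel h).symm
    have e34 : U3 + U4 ≠ U1 + U2 := fun h => hP h.symm
    rw [hcdef] at hx
    simp only [Finsupp.add_apply, Finsupp.single_eq_same,
      Finsupp.single_eq_of_ne' e0, Finsupp.single_eq_of_ne' e13,
      Finsupp.single_eq_of_ne' e14, Finsupp.single_eq_of_ne' e23,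
      Finsupp.single_eq_of_ne' e24, Finsupp.single_eq_of_ne' e34,
      Finsupp.coe_zero, Pi.zero_apply] at hx
    have : 2 * α1 * α2 = 0 := by linarith
    rcases mul_eq_zero.mp this with h | h
    · rcases mul_eq_zero.mp h with h | h
      · norm_num at h
      · exact hα1 h
    · exact hα2 h
  have key2 : ∀ a b cc d : ZMod 2, a + b = cc + d → a + cc = b + d := by decide
  have key3 : ∀ a b cc d : ZMod 2, a + b = cc + d → a + d = b + cc := by decide
  have hQ : U1 + U3 = U2 + U4 := funext fun i => key2 _ _ _ _ (congrFun hP i)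
  have hR : U1 + U4 = U2 + U3 := funext fun i => key3 _ _ _ _ (congrFun hP i)
  refine ⟨?_, hP, hQ, hR⟩
  have hx := DFunLike.congr_fun hc0 0
  have e12 := hne0 U1 U2 h12
  have e13 := hne0 U1 U3 h13
  have e14 := hne0 U1 U4 h14
  have e23 := hne0 U2 U3 h23
  have e24 := hne0 U2 U4 h24
  have e34 := hne0 U3 U4 h34
  rw [hcdef] at hx
  simp only [Finsupp.add_apply, Finsupp.single_eq_same,
    Finsupp.single_eq_of_ne' e12, Finsupp.single_eq_of_ne' e13,
    Finsupp.single_eq_of_ne' e14, Finsupp.single_eq_of_ne' e23,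
    Finsupp.single_eq_of_ne' e24, Finsupp.single_eq_of_ne' e34,
    Finsupp.coe_zero, Pi.zero_apply] at hx
  linarith
end

section
/- Let α1, α2, α3, α4 ∈ ℝ be all nonzero and satisfy α1² + α2² + α3² + α4² = 1, α1*α2 + α3*α4 = 0, α1*α3 + α2*α4 = 0, and α1*α4 + α2*α3 = 0. Then (α1, α2, α3, α4) is one of the eight quadruples ±(1/2)•(−1,1,1,1), ±(1/2)•(1,−1,1,1), ±(1/2)•(1,1,−1,1), ±(1/2)•(1,1,1,−1). -/
set_option maxHeartbeats 1000000 in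
theorem stmt_5 (α1 α2 α3 α4 : ℝ)
    (hα1 : α1 ≠ 0) (hα2 : α2 ≠ 0) (hα3 : α3 ≠ 0) (hα4 : α4 ≠ 0)
    (hsum : α1 ^ 2 + α2 ^ 2 + α3 ^ 2 + α4 ^ 2 = 1)
    (h1 : α1 * α2 + α3 * α4 = 0)
    (h2 : α1 * α3 + α2 * α4 = 0)
    (h3 : α1 * α4 + α2 * α3 = 0) :
    (α1, α2, α3, α4) = (-(1 / 2), 1 / 2, 1 / 2, 1 / 2) ∨
    (α1, α2, α3, α4) = (1 / 2, -(1 / 2), -(1 / 2), -(1 / 2)) ∨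
    (α1, α2, α3, α4) = (1 / 2, -(1 / 2), 1 / 2, 1 / 2) ∨
    (α1, α2, α3, α4) = (-(1 / 2), 1 / 2, -(1 / 2), -(1 / 2)) ∨
    (α1, α2, α3, α4) = (1 / 2, 1 / 2, -(1 / 2), 1 / 2) ∨
    (α1, α2, α3, α4) = (-(1 / 2), -(1 / 2), 1 / 2, -(1 / 2)) ∨
    (α1, α2, α3, α4) = (1 / 2, 1 / 2, 1 / 2, -(1 / 2)) ∨
    (α1, α2, α3, α4) = (-(1 / 2), -(1 / 2), -(1 / 2), 1 / 2) := by
  have e1 : (α1 + α2) * (α3 + α4) = 0 := by linear_combination h2 + h3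
  have e2 : (α1 - α2) * (α3 - α4) = 0 := by linear_combination h2 - h3
  rcases mul_eq_zero.1 e1 with ha | hb <;> rcases mul_eq_zero.1 e2 with hc | hd
  · exact absurd (by linarith : α1 = 0) hα1
  · have hb2 : α2 = -α1 := by linarith
    have hd2 : α4 = α3 := by linarith
    rw [hb2, hd2] at hsum h1
    have k1 : α1 ^ 2 = 1 / 4 := by linear_combination hsum / 4 - h1 / 2
    have k3 : α3 ^ 2 = 1 / 4 := by linear_combination hsum / 4 + h1 / 2
    have s1 : (α1 - 1/2) * (α1 + 1/2) = 0 := by linear_combination k1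
    have s3 : (α3 - 1/2) * (α3 + 1/2) = 0 := by linear_combination k3
    rcases mul_eq_zero.1 s1 with p1 | p1 <;> rcases mul_eq_zero.1 s3 with p3 | p3
    · right; right; left; simp only [Prod.mk.injEq]; exact ⟨by linarith, by linarith, by linarith, by linarith⟩
    · right; left; simp only [Prod.mk.injEq]; exact ⟨by linarith, by linarith, by linarith, by linarith⟩
    · left; simp only [Prod.mk.injEq]; exact ⟨by linarith, by linarith, by linarith, by linarith⟩
    · right; right; right; left; simp only [Prod.mk.injEq]; exact ⟨by linarith, by linarith, by linarith, by linarith⟩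
  · have hc2 : α2 = α1 := by linarith
    have hb2 : α4 = -α3 := by linarith
    rw [hc2, hb2] at hsum h1
    have k1 : α1 ^ 2 = 1 / 4 := by linear_combination hsum / 4 + h1 / 2
    have k3 : α3 ^ 2 = 1 / 4 := by linear_combination hsum / 4 - h1 / 2
    have s1 : (α1 - 1/2) * (α1 + 1/2) = 0 := by linear_combination k1
    have s3 : (α3 - 1/2) * (α3 + 1/2) = 0 := by linear_combination k3
    rcases mul_eq_zero.1 s1 with p1 | p1 <;> rcases mul_eq_zero.1 s3 with p3 | p3
    · right; right; right; right; right; right; left; simp only [Prod.mk.injEq]; exact ⟨by linarith, by linarith, by linarith, by linarith⟩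
    · right; right; right; right; left; simp only [Prod.mk.injEq]; exact ⟨by linarith, by linarith, by linarith, by linarith⟩
    · right; right; right; right; right; left; simp only [Prod.mk.injEq]; exact ⟨by linarith, by linarith, by linarith, by linarith⟩
    · right; right; right; right; right; right; right; simp only [Prod.mk.injEq]; exact ⟨by linarith, by linarith, by linarith, by linarith⟩
  · exact absurd (by linarith : α3 = 0) hα3
end

section
/- There is no 'type-3 observable': there do not exist pairwise distinct U1, U2, U3 ∈ (Fin n → ZMod 2) and nonzero reals α1, α2, α3 such that (α1 • S U1 + α2 • S U2 + α3 • S U3)² = 1. -/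
theorem stmt_7 {n : ℕ} (hn : 1 ≤ n) {M : Type*} [Ring M] [Algebra ℝ M]
    (S : (Fin n → ZMod 2) → M)
    (hS0 : S 0 = 1)
    (hSmul : ∀ U V : Fin n → ZMod 2, S (U + V) = S U * S V)
    (hind : LinearIndependent ℝ S) :
    ¬ ∃ (U1 U2 U3 : Fin n → ZMod 2) (α1 α2 α3 : ℝ),
        U1 ≠ U2 ∧ U1 ≠ U3 ∧ U2 ≠ U3 ∧ α1 ≠ 0 ∧ α2 ≠ 0 ∧ α3 ≠ 0 ∧
        (α1 • S U1 + α2 • S U2 + α3 • S U3) ^ 2 = 1 := by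
  rintro ⟨U1, U2, U3, α1, α2, α3, h12, h13, h23, hα1, hα2, hα3, hsq⟩
  classical
  have hmul : ∀ U V, S U * S V = S (U + V) := fun U V => (hSmul U V).symm
  have hself : ∀ U : Fin n → ZMod 2, U + U = 0 := fun U => funext fun i => by
    have h : ∀ a : ZMod 2, a + a = 0 := by decide
    exact h (U i)
  have hcancel : ∀ U V : Fin n → ZMod 2, U + V = 0 → U = V := by
    intro U V h
    calc U = U + (V + V) := by rw [hself, add_zero]
      _ = (U + V) + V := (add_assoc _ _ _).symm
      _ = V := by rw [h, zero_add]
  set A := U1 + U2 with hA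
  set B := U1 + U3 with hB
  set C := U2 + U3 with hC
  have hA0 : A ≠ 0 := fun h => h12 (hcancel _ _ h)
  have hB0 : B ≠ 0 := fun h => h13 (hcancel _ _ h)
  have hC0 : C ≠ 0 := fun h => h23 (hcancel _ _ h)
  have hAB : A ≠ B := fun h => h23 (add_left_cancel h)
  have hAC : A ≠ C := fun h => h13 (add_left_cancel
    (show U2 + U1 = U2 + U3 by rw [add_comm U2 U1]; exact h))
  have hBC : B ≠ C := fun h => h12 (add_right_cancel h)
  have c21 : U2 + U1 = A := add_comm U2 U1
  have c31 : U3 + U1 = B := add_comm U3 U1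
  have c32 : U3 + U2 = C := add_comm U3 U2
  have key : (α1 ^ 2 + α2 ^ 2 + α3 ^ 2 - 1) • S 0 + (2 * α1 * α2) • S A
      + (2 * α1 * α3) • S B + (2 * α2 * α3) • S C = 0 := by
    have e : (α1 • S U1 + α2 • S U2 + α3 • S U3) ^ 2 =
        (α1 ^ 2 + α2 ^ 2 + α3 ^ 2) • S 0 + (2 * α1 * α2) • S A
        + (2 * α1 * α3) • S B + (2 * α2 * α3) • S C := by
      simp only [sq, add_mul, mul_add, smul_mul_smul_comm, hmul, hself, hA, hB, hC, c21, c31, c32]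
      module
    have h1 : ((1 : ℝ)) • S 0 = (1 : M) := by rw [hS0, one_smul]
    rw [← h1] at hsq
    rw [e] at hsq
    linear_combination (norm := module) hsq
  set g : (Fin n → ZMod 2) → ℝ := fun x =>
    if x = 0 then α1 ^ 2 + α2 ^ 2 + α3 ^ 2 - 1
    else if x = A then 2 * α1 * α2
    else if x = B then 2 * α1 * α3
    else 2 * α2 * α3 with hg
  set s : Finset (Fin n → ZMod 2) := insert 0 (insert A (insert B {C})) with hs
  have hsum : ∑ x ∈ s, g x • S x = 0 := by
    rw [hs, Finset.sum_insert (by simp [Ne.symm hA0, Ne.symm hB0, Ne.symm hC0]),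
      Finset.sum_insert (by simp [hAB, hAC]),
      Finset.sum_insert (by simp [hBC]), Finset.sum_singleton]
    simp only [hg, if_pos rfl, if_neg hA0, if_neg hB0, if_neg hC0, if_neg hAB, if_neg hBC,
      if_neg hAB.symm, if_neg hAC.symm, if_neg hBC.symm]
    simp only [if_true, ← add_assoc]
    exact key
  have hgA := linearIndependent_iff'.mp hind s g hsum A (by simp [hs])
  have : (2 : ℝ) * α1 * α2 = 0 := by
    simpa [hg, hA0] using hgA
  have := mul_ne_zero (mul_ne_zero (two_ne_zero (α := ℝ)) hα1) hα2
  exact this ‹_›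
end

section
/- Fix V1, V2 ∈ (Fin n → ZMod 2) and let G ∈ M satisfy G * S V1 = S V1 * G and G * S V2 = −(S V2 * G) (G commutes with S V1 and anticommutes with S V2). Then T V1 V2 * G = −(S V1 * (G * T V1 V2)) = −(G * (S V1 * T V1 V2)) = −(G * (T V1 V2 * S V1)). -/
theorem stmt_9 {n : ℕ} (hn : 1 ≤ n) {M : Type*} [Ring M] [Algebra ℝ M]
    (S : (Fin n → ZMod 2) → M)
    (hS0 : S 0 = 1)
    (hSmul : ∀ U V : Fin n → ZMod 2, S (U + V) = S U * S V)
    (V1 V2 : Fin n → ZMod 2)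
    (T : M) (hT : T = (1 / 2 : ℝ) • (-1 + S V1 + S V2 + S (V1 + V2)))
    (G : M)
    (hG1 : G * S V1 = S V1 * G)
    (hG2 : G * S V2 = -(S V2 * G)) :
    T * G = -(S V1 * (G * T)) ∧
    T * G = -(G * (S V1 * T)) ∧
    T * G = -(G * (T * S V1)) := by
  have hc : S (V1 + V2) = S V1 * S V2 := hSmul V1 V2
  have hba : S V2 * S V1 = S V1 * S V2 := by
    rw [← hSmul, ← hSmul, add_comm]
  have haa : S V1 * S V1 = 1 := by
    rw [← hSmul]
    have : V1 + V1 = 0 := by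
      funext i; exact CharTwo.add_self_eq_zero _
    rw [this, hS0]
  subst hT
  set a := S V1 with ha
  set b := S V2 with hb
  have hGa' : ∀ x : M, G * (a * x) = a * (G * x) := by
    intro x; rw [← mul_assoc, hG1, mul_assoc]
  have hGb' : ∀ x : M, G * (b * x) = -(b * (G * x)) := by
    intro x; rw [← mul_assoc, hG2, neg_mul, mul_assoc]
  have haa' : ∀ x : M, a * (a * x) = x := by
    intro x; rw [← mul_assoc, haa, one_mul]
  have hba' : ∀ x : M, b * (a * x) = a * (b * x) := by
    intro x; rw [← mul_assoc, hba, mul_assoc]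
  rw [hc]
  refine ⟨?_, ?_, ?_⟩ <;>
  · simp only [smul_mul_assoc, mul_smul_comm, smul_neg, neg_add, add_mul, mul_add,
      neg_mul, mul_neg, neg_neg, one_mul, mul_one, mul_assoc, hG1, hG2, hGa', hGb',
      haa, haa', hba, hba']
    module
end

section
/- Fix V, V1, V2 ∈ (Fin n → ZMod 2). If ⟨C i, V⟩ = p i for every i : Fin K, then (S V * T V1 V2) (W i ψ) = W i ψ for every i : Fin K, i.e., the type-4 operator S V * T V1 V2 stabilizes the CWS code spanned by the vectors W i ψ. -/
theorem stmt_10 {n K : ℕ} (hn : 1 ≤ n) (hK : 1 ≤ K)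
    {H : Type*} [AddCommGroup H] [Module ℂ H]
    (S : (Fin n → ZMod 2) → Module.End ℂ H)
    (hS0 : S 0 = 1)
    (hSmul : ∀ U V : Fin n → ZMod 2, S (U + V) = S U * S V)
    (ψ : H) (hψ : ∀ V : Fin n → ZMod 2, S V ψ = ψ)
    (C : Fin K → (Fin n → ZMod 2))
    (W : Fin K → Module.End ℂ H)
    (hW : ∀ (i : Fin K) (V : Fin n → ZMod 2),
      W i * S V = (if (∑ k, C i k * V k) = 0 then (1 : ℝ) else -1) • (S V * W i))
    (V V1 V2 : Fin n → ZMod 2)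
    (p : Fin K → ZMod 2)
    (hp : ∀ i : Fin K,
      p i = if (∑ k, C i k * V1 k) = 0 ∧ (∑ k, C i k * V2 k) = 0 then 0 else 1)
    (T : Module.End ℂ H)
    (hT : T = (1 / 2 : ℝ) • (-1 + S V1 + S V2 + S (V1 + V2)))
    (hCV : ∀ i : Fin K, (∑ k, C i k * V k) = p i) :
    ∀ i : Fin K, (S V * T) (W i ψ) = W i ψ := by
  intro i
  have key : ∀ V' : Fin n → ZMod 2,
      S V' (W i ψ) = (if (∑ k, C i k * V' k) = 0 then (1 : ℝ) else -1) • W i ψ := by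
    intro V'
    set ε : ℝ := if (∑ k, C i k * V' k) = 0 then (1 : ℝ) else -1 with hε
    have hε2 : ε * ε = 1 := by
      rw [hε]; split_ifs <;> norm_num
    have h1 : S V' * W i = ε • (W i * S V') := by
      have h := hW i V'
      rw [← hε] at h
      calc S V' * W i = (ε * ε) • (S V' * W i) := by rw [hε2, one_smul]
        _ = ε • (ε • (S V' * W i)) := by rw [smul_smul]
        _ = ε • (W i * S V') := by rw [← h]
    have : (S V' * W i) ψ = (ε • (W i * S V')) ψ := by rw [h1]
    simpa [Module.End.mul_apply, hψ V'] using this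
  have h12 : (∑ k, C i k * (V1 + V2) k) =
      (∑ k, C i k * V1 k) + (∑ k, C i k * V2 k) := by
    simp [Pi.add_apply, mul_add, Finset.sum_add_distrib]
  have hTW : (S V * T) (W i ψ) = S V (T (W i ψ)) := rfl
  rw [hTW, hT]
  have expand : ((1 / 2 : ℝ) • (-1 + S V1 + S V2 + S (V1 + V2))) (W i ψ)
      = (1 / 2 : ℝ) • (-(W i ψ) + S V1 (W i ψ) + S V2 (W i ψ) + S (V1 + V2) (W i ψ)) := by
    simp
  rw [expand, key V1, key V2, key (V1 + V2), h12]
  have hCVi := hCV i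
  rw [hp i] at hCVi
  have hne : (1 : ZMod 2) ≠ 0 := by decide
  have h11 : (1 : ZMod 2) + 1 = 0 := by decide
  simp only [LinearMap.map_smul_of_tower, map_smul, map_add, map_neg, key V]
  rcases (by decide : ∀ a : ZMod 2, a = 0 ∨ a = 1) (∑ k, C i k * V1 k) with h1 | h1 <;>
    rcases (by decide : ∀ a : ZMod 2, a = 0 ∨ a = 1) (∑ k, C i k * V2 k) with h2 | h2 <;>
    (try simp only [h1, h2, hne, h11, zero_add, add_zero, eq_self_iff_true,and_self,
      and_false, false_and, and_true, true_and, if_true, if_false, ite_true, ite_false,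
      one_smul, neg_smul, smul_neg, neg_neg] at hCVi ⊢) <;>
    (try simp only [hCVi, hne, eq_self_iff_true, if_true, if_false, ite_true, ite_false,
      one_smul, neg_smul, smul_neg, neg_neg]) <;>
    try module
end

section
/- Assume ψ ≠ 0, each W i is invertible, and there is an index i0 with C i0 = 0 and W i0 = 1. Let A ∈ M be of the form A = α1 • S U1 + α2 • S U2 + α3 • S U3 + α4 • S U4 with U1, U2, U3, U4 pairwise distinct and α1, α2, α3, α4 nonzero reals, and suppose A² = 1 and A (W i ψ) = W i ψ for every i : Fin K. Then there exist V ∈ (Fin n → ZMod 2) and V1, V2 ∈ (Fin n → ZMod 2) with V1 ≠ V2, V1 ≠ 0, V2 ≠ 0, such that A = S V * T V1 V2 and ⟨C i, V⟩ = p i for every i. -/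
set_option maxHeartbeats 2000000

lemma zmod2_two : ∀ x : ZMod 2, x = 0 ∨ x = 1 := by decide

lemma pi_add_self {n : ℕ} (x : Fin n → ZMod 2) : x + x = 0 := by
  funext k
  exact (by decide : ∀ y : ZMod 2, y + y = 0) _

lemma pi_add_eq_zero_iff {n : ℕ} (x y : Fin n → ZMod 2) : x + y = 0 ↔ x = y := by
  constructor
  · intro h
    funext k
    have hk := congrFun h k
    exact (by decide : ∀ a b : ZMod 2, a + b = 0 → a = b) _ _ hk
  · rintro rfl; exact pi_add_self x

lemma stmt11_aux {n K : ℕ} {H : Type*} [AddCommGroup H] [Module ℂ H]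
    (S : (Fin n → ZMod 2) → Module.End ℂ H)
    (hSmul : ∀ U V : Fin n → ZMod 2, S (U + V) = S U * S V)
    (C : Fin K → (Fin n → ZMod 2))
    (Ua Ub Uc Ud : Fin n → ZMod 2)
    (hab : Ua ≠ Ub) (had : Ua ≠ Ud) (hbd : Ub ≠ Ud)
    (hsum0 : Ua + Ub + Uc + Ud = 0)
    (A : Module.End ℂ H)
    (hA : A = (1/2 : ℝ) • (-(S Ud) + S Ua + S Ub + S Uc))
    (heps : ∀ i : Fin K,
      (if (∑ k, C i k * Ua k) = 0 then (1:ℝ) else -1) +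
      (if (∑ k, C i k * Ub k) = 0 then (1:ℝ) else -1) +
      (if (∑ k, C i k * Uc k) = 0 then (1:ℝ) else -1) -
      (if (∑ k, C i k * Ud k) = 0 then (1:ℝ) else -1) = 2) :
    ∃ V V1 V2 : Fin n → ZMod 2,
      V1 ≠ V2 ∧ V1 ≠ 0 ∧ V2 ≠ 0 ∧
      A = S V * ((1 / 2 : ℝ) • (-1 + S V1 + S V2 + S (V1 + V2))) ∧
      ∀ i : Fin K,
        (∑ k, C i k * V k) =
          (if (∑ k, C i k * V1 k) = 0 ∧ (∑ k, C i k * V2 k) = 0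
            then (0 : ZMod 2) else 1) := by
  refine ⟨Ud, Ua + Ud, Ub + Ud, ?_, ?_, ?_, ?_, ?_⟩
  · intro h; exact hab (add_right_cancel h)
  · intro h; exact had ((pi_add_eq_zero_iff _ _).mp h)
  · intro h; exact hbd ((pi_add_eq_zero_iff _ _).mp h)
  · -- A = S Ud * T
    have e1 : Ud + (Ua + Ud) = Ua := by
      rw [show Ud + (Ua + Ud) = Ua + (Ud + Ud) from by abel, pi_add_self, add_zero]
    have e2 : Ud + (Ub + Ud) = Ub := by
      rw [show Ud + (Ub + Ud) = Ub + (Ud + Ud) from by abel, pi_add_self, add_zero]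
    have e3 : Ud + (Ua + Ud + (Ub + Ud)) = Uc := by
      rw [show Ud + (Ua + Ud + (Ub + Ud)) = (Ua + Ub + Ud) + (Ud + Ud) from by abel,
        pi_add_self, add_zero]
      apply (pi_add_eq_zero_iff _ _).mp
      rw [show Ua + Ub + Ud + Uc = Ua + Ub + Uc + Ud from by abel]
      exact hsum0
    rw [hA, mul_smul_comm]
    congr 1
    rw [mul_add, mul_add, mul_add, mul_neg_one, ← hSmul, ← hSmul, ← hSmul, e1, e2, e3]
  · -- codeword condition
    intro i
    have hi := heps i
    have hb1 : (∑ k, C i k * (Ua + Ud) k) = (∑ k, C i k * Ua k) + (∑ k, C i k * Ud k) := by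
      rw [← Finset.sum_add_distrib]
      exact Finset.sum_congr rfl fun k _ => by simp [mul_add]
    have hb2 : (∑ k, C i k * (Ub + Ud) k) = (∑ k, C i k * Ub k) + (∑ k, C i k * Ud k) := by
      rw [← Finset.sum_add_distrib]
      exact Finset.sum_congr rfl fun k _ => by simp [mul_add]
    rw [hb1, hb2]
    rcases zmod2_two (∑ k, C i k * Ua k) with ha | ha <;>
      rcases zmod2_two (∑ k, C i k * Ub k) with hb | hb <;>
      rcases zmod2_two (∑ k, C i k * Uc k) with hc | hc <;>
      rcases zmod2_two (∑ k, C i k * Ud k) with hd | hd <;>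
      simp only [ha, hb, hc, hd] at hi ⊢ <;>
      first
        | decide
        | norm_num at hi

lemma cond_neg {n : ℕ} {a b c d x y : Fin n → ZMod 2}
    (hre : a + b + (c + d) = x + y) (hxy : x ≠ y) : ¬(a + b = c + d) := by
  intro h
  apply hxy
  apply (pi_add_eq_zero_iff x y).mp
  rw [← hre, h]
  exact pi_add_self _



theorem stmt_11 {n K : ℕ} (hn : 1 ≤ n) (hK : 1 ≤ K)
    {H : Type*} [AddCommGroup H] [Module ℂ H]
    (S : (Fin n → ZMod 2) → Module.End ℂ H)
    (hS0 : S 0 = 1)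
    (hSmul : ∀ U V : Fin n → ZMod 2, S (U + V) = S U * S V)
    (hind : LinearIndependent ℝ S)
    (ψ : H) (hψ : ∀ V : Fin n → ZMod 2, S V ψ = ψ) (hψ0 : ψ ≠ 0)
    (C : Fin K → (Fin n → ZMod 2))
    (W : Fin K → Module.End ℂ H)
    (hW : ∀ (i : Fin K) (V : Fin n → ZMod 2),
      W i * S V = (if (∑ k, C i k * V k) = 0 then (1 : ℝ) else -1) • (S V * W i))
    (hWinv : ∀ i : Fin K, IsUnit (W i))
    (i0 : Fin K) (hC0 : C i0 = 0) (hW0 : W i0 = 1)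
    (U1 U2 U3 U4 : Fin n → ZMod 2)
    (h12 : U1 ≠ U2) (h13 : U1 ≠ U3) (h14 : U1 ≠ U4)
    (h23 : U2 ≠ U3) (h24 : U2 ≠ U4) (h34 : U3 ≠ U4)
    (α1 α2 α3 α4 : ℝ)
    (hα1 : α1 ≠ 0) (hα2 : α2 ≠ 0) (hα3 : α3 ≠ 0) (hα4 : α4 ≠ 0)
    (A : Module.End ℂ H)
    (hA : A = α1 • S U1 + α2 • S U2 + α3 • S U3 + α4 • S U4)
    (hA2 : A ^ 2 = 1)
    (hstab : ∀ i : Fin K, A (W i ψ) = W i ψ) :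
    ∃ V V1 V2 : Fin n → ZMod 2,
      V1 ≠ V2 ∧ V1 ≠ 0 ∧ V2 ≠ 0 ∧
      A = S V * ((1 / 2 : ℝ) • (-1 + S V1 + S V2 + S (V1 + V2))) ∧
      ∀ i : Fin K,
        (∑ k, C i k * V k) =
          (if (∑ k, C i k * V1 k) = 0 ∧ (∑ k, C i k * V2 k) = 0
            then (0 : ZMod 2) else 1) := by
  classical
  have hwψ : ∀ i : Fin K, W i ψ ≠ 0 := by
    intro i h
    obtain ⟨u, hu⟩ := hWinv i
    apply hψ0
    have h1 : (↑u⁻¹ : Module.End ℂ H) (W i ψ) = ψ := by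
      rw [← hu, ← Module.End.mul_apply, Units.inv_mul, Module.End.one_apply]
    rw [h, map_zero] at h1
    exact h1.symm
  have hSW : ∀ (i : Fin K) (U : Fin n → ZMod 2),
      S U (W i ψ) = (if (∑ k, C i k * U k) = 0 then (1:ℝ) else -1) • (W i ψ) := by
    intro i U
    have h1 := congrArg (fun f : Module.End ℂ H => f ψ) (hW i U)
    simp only [Module.End.mul_apply, LinearMap.smul_apply] at h1
    rw [hψ U] at h1
    set e : ℝ := (if (∑ k, C i k * U k) = 0 then (1:ℝ) else -1) with he
    have he2 : e * e = 1 := by rw [he]; split_ifs <;> norm_num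
    calc S U (W i ψ) = (e * e) • S U (W i ψ) := by rw [he2, one_smul]
    _ = e • (e • S U (W i ψ)) := by rw [mul_smul]
    _ = e • (W i ψ) := by rw [← h1]
  have heps : ∀ i : Fin K,
      α1 * (if (∑ k, C i k * U1 k) = 0 then (1:ℝ) else -1)
      + α2 * (if (∑ k, C i k * U2 k) = 0 then (1:ℝ) else -1)
      + α3 * (if (∑ k, C i k * U3 k) = 0 then (1:ℝ) else -1)
      + α4 * (if (∑ k, C i k * U4 k) = 0 then (1:ℝ) else -1) = 1 := by
    intro i
    have hw0 := hstab i
    rw [hA] at hw0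
    simp only [LinearMap.add_apply, LinearMap.smul_apply] at hw0
    rw [hSW i U1, hSW i U2, hSW i U3, hSW i U4] at hw0
    have hw1 : (α1 * (if (∑ k, C i k * U1 k) = 0 then (1:ℝ) else -1) + α2 * (if (∑ k, C i k * U2 k) = 0 then (1:ℝ) else -1) + α3 * (if (∑ k, C i k * U3 k) = 0 then (1:ℝ) else -1) + α4 * (if (∑ k, C i k * U4 k) = 0 then (1:ℝ) else -1)) • (W i ψ) = W i ψ := by
      rw [add_smul, add_smul, add_smul, mul_smul, mul_smul, mul_smul, mul_smul]
      exact hw0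
    have hz : ((α1 * (if (∑ k, C i k * U1 k) = 0 then (1:ℝ) else -1) + α2 * (if (∑ k, C i k * U2 k) = 0 then (1:ℝ) else -1) + α3 * (if (∑ k, C i k * U3 k) = 0 then (1:ℝ) else -1) + α4 * (if (∑ k, C i k * U4 k) = 0 then (1:ℝ) else -1)) - 1) • (W i ψ) = 0 := by
      rw [sub_smul, one_smul, hw1, sub_self]
    rcases smul_eq_zero.mp hz with h | h
    · linarith
    · exact absurd h (hwψ i)
  have esum : α1 + α2 + α3 + α4 = 1 := by
    have h := heps i0
    simp [hC0] at h
    linarith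
  have hAA : A * A = (α1 * α1) • S (U1 + U1) + (α1 * α2) • S (U1 + U2) + (α1 * α3) • S (U1 + U3) + (α1 * α4) • S (U1 + U4) + (α2 * α1) • S (U2 + U1) + (α2 * α2) • S (U2 + U2) + (α2 * α3) • S (U2 + U3) + (α2 * α4) • S (U2 + U4) + (α3 * α1) • S (U3 + U1) + (α3 * α2) • S (U3 + U2) + (α3 * α3) • S (U3 + U3) + (α3 * α4) • S (U3 + U4) + (α4 * α1) • S (U4 + U1) + (α4 * α2) • S (U4 + U2) + (α4 * α3) • S (U4 + U3) + (α4 * α4) • S (U4 + U4) := by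
    rw [hA]
    simp only [add_mul, mul_add, smul_mul_assoc, mul_smul_comm, smul_smul, ← hSmul]
    module
  have hg : ∀ X : Fin n → ZMod 2, ((if U1 + U1 = X then α1 * α1 else 0) + (if U1 + U2 = X then α1 * α2 else 0) + (if U1 + U3 = X then α1 * α3 else 0) + (if U1 + U4 = X then α1 * α4 else 0) + (if U2 + U1 = X then α2 * α1 else 0) + (if U2 + U2 = X then α2 * α2 else 0) + (if U2 + U3 = X then α2 * α3 else 0) + (if U2 + U4 = X then α2 * α4 else 0) + (if U3 + U1 = X then α3 * α1 else 0) + (if U3 + U2 = X then α3 * α2 else 0) + (if U3 + U3 = X then α3 * α3 else 0) + (if U3 + U4 = X then α3 * α4 else 0) + (if U4 + U1 = X then α4 * α1 else 0) + (if U4 + U2 = X then α4 * α2 else 0) + (if U4 + U3 = X then α4 * α3 else 0) + (if U4 + U4 = X then α4 * α4 else 0)) - (if X = 0 then (1:ℝ) else 0) = 0 := by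
    refine Fintype.linearIndependent_iff.mp hind (fun X => ((if U1 + U1 = X then α1 * α1 else 0) + (if U1 + U2 = X then α1 * α2 else 0) + (if U1 + U3 = X then α1 * α3 else 0) + (if U1 + U4 = X then α1 * α4 else 0) + (if U2 + U1 = X then α2 * α1 else 0) + (if U2 + U2 = X then α2 * α2 else 0) + (if U2 + U3 = X then α2 * α3 else 0) + (if U2 + U4 = X then α2 * α4 else 0) + (if U3 + U1 = X then α3 * α1 else 0) + (if U3 + U2 = X then α3 * α2 else 0) + (if U3 + U3 = X then α3 * α3 else 0) + (if U3 + U4 = X then α3 * α4 else 0) + (if U4 + U1 = X then α4 * α1 else 0) + (if U4 + U2 = X then α4 * α2 else 0) + (if U4 + U3 = X then α4 * α3 else 0) + (if U4 + U4 = X then α4 * α4 else 0)) - (if X = 0 then (1:ℝ) else 0)) ?_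
    have step1 : ∑ X : Fin n → ZMod 2, (((if U1 + U1 = X then α1 * α1 else 0) + (if U1 + U2 = X then α1 * α2 else 0) + (if U1 + U3 = X then α1 * α3 else 0) + (if U1 + U4 = X then α1 * α4 else 0) + (if U2 + U1 = X then α2 * α1 else 0) + (if U2 + U2 = X then α2 * α2 else 0) + (if U2 + U3 = X then α2 * α3 else 0) + (if U2 + U4 = X then α2 * α4 else 0) + (if U3 + U1 = X then α3 * α1 else 0) + (if U3 + U2 = X then α3 * α2 else 0) + (if U3 + U3 = X then α3 * α3 else 0) + (if U3 + U4 = X then α3 * α4 else 0) + (if U4 + U1 = X then α4 * α1 else 0) + (if U4 + U2 = X then α4 * α2 else 0) + (if U4 + U3 = X then α4 * α3 else 0) + (if U4 + U4 = X then α4 * α4 else 0)) - (if X = 0 then (1:ℝ) else 0)) • S X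
        = ((α1 * α1) • S (U1 + U1) + (α1 * α2) • S (U1 + U2) + (α1 * α3) • S (U1 + U3) + (α1 * α4) • S (U1 + U4) + (α2 * α1) • S (U2 + U1) + (α2 * α2) • S (U2 + U2) + (α2 * α3) • S (U2 + U3) + (α2 * α4) • S (U2 + U4) + (α3 * α1) • S (U3 + U1) + (α3 * α2) • S (U3 + U2) + (α3 * α3) • S (U3 + U3) + (α3 * α4) • S (U3 + U4) + (α4 * α1) • S (U4 + U1) + (α4 * α2) • S (U4 + U2) + (α4 * α3) • S (U4 + U3) + (α4 * α4) • S (U4 + U4)) - S 0 := by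
      simp only [sub_smul, add_smul, ite_smul, zero_smul, one_smul,
        Finset.sum_sub_distrib, Finset.sum_add_distrib, Finset.sum_ite_eq,
        Finset.sum_ite_eq', Finset.mem_univ, if_true]
    rw [step1, ← hAA, hS0, ← sq, hA2, sub_self]
  have hkey : U1 + U2 = U3 + U4 := by
    by_contra hkey
    have hk0 := hg (U1 + U2)
    have ck11 : ¬(U1 + U1 = U1 + U2) := cond_neg (by rw [pi_add_self, zero_add]) h12
    have ck13 : ¬(U1 + U3 = U1 + U2) := cond_neg (by rw [show U1 + U3 + (U1 + U2) = U2 + U3 + (U1 + U1) from by abel, pi_add_self, add_zero]) h23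
    have ck14 : ¬(U1 + U4 = U1 + U2) := cond_neg (by rw [show U1 + U4 + (U1 + U2) = U2 + U4 + (U1 + U1) from by abel, pi_add_self, add_zero]) h24
    have ck22 : ¬(U2 + U2 = U1 + U2) := cond_neg (by rw [pi_add_self, zero_add]) h12
    have ck23 : ¬(U2 + U3 = U1 + U2) := cond_neg (by rw [show U2 + U3 + (U1 + U2) = U1 + U3 + (U2 + U2) from by abel, pi_add_self, add_zero]) h13
    have ck24 : ¬(U2 + U4 = U1 + U2) := cond_neg (by rw [show U2 + U4 + (U1 + U2) = U1 + U4 + (U2 + U2) from by abel, pi_add_self, add_zero]) h14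
    have ck31 : ¬(U3 + U1 = U1 + U2) := cond_neg (by rw [show U3 + U1 + (U1 + U2) = U2 + U3 + (U1 + U1) from by abel, pi_add_self, add_zero]) h23
    have ck32 : ¬(U3 + U2 = U1 + U2) := cond_neg (by rw [show U3 + U2 + (U1 + U2) = U1 + U3 + (U2 + U2) from by abel, pi_add_self, add_zero]) h13
    have ck33 : ¬(U3 + U3 = U1 + U2) := cond_neg (by rw [pi_add_self, zero_add]) h12
    have ck34 : ¬(U3 + U4 = U1 + U2) := fun hh => hkey hh.symm
    have ck41 : ¬(U4 + U1 = U1 + U2) := cond_neg (by rw [show U4 + U1 + (U1 + U2) = U2 + U4 + (U1 + U1) from by abel, pi_add_self, add_zero]) h24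
    have ck42 : ¬(U4 + U2 = U1 + U2) := cond_neg (by rw [show U4 + U2 + (U1 + U2) = U1 + U4 + (U2 + U2) from by abel, pi_add_self, add_zero]) h14
    have ck43 : ¬(U4 + U3 = U1 + U2) := fun hh => hkey (hh.symm.trans (add_comm U4 U3))
    have ck44 : ¬(U4 + U4 = U1 + U2) := cond_neg (by rw [pi_add_self, zero_add]) h12
    have ckz : ¬(U1 + U2 = 0) := fun hh => h12 ((pi_add_eq_zero_iff _ _).mp hh)
    rw [if_neg ck11, if_pos rfl, if_neg ck13, if_neg ck14, if_pos (add_comm U2 U1), if_neg ck22, if_neg ck23, if_neg ck24, if_neg ck31, if_neg ck32, if_neg ck33, if_neg ck34, if_neg ck41, if_neg ck42, if_neg ck43, if_neg ck44, if_neg ckz] at hk0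
    rcases mul_eq_zero.mp (show α1 * α2 = 0 by linear_combination hk0 / 2) with h | h
    · exact hα1 h
    · exact hα2 h
  have key0 : U1 + U2 + (U3 + U4) = 0 := by rw [hkey]; exact pi_add_self _
  have he12 := hg (U1 + U2)
  have ca11 : ¬(U1 + U1 = U1 + U2) := cond_neg (by rw [pi_add_self, zero_add]) h12
  have ca13 : ¬(U1 + U3 = U1 + U2) := cond_neg (by rw [show U1 + U3 + (U1 + U2) = U2 + U3 + (U1 + U1) from by abel, pi_add_self, add_zero]) h23
  have ca14 : ¬(U1 + U4 = U1 + U2) := cond_neg (by rw [show U1 + U4 + (U1 + U2) = U2 + U4 + (U1 + U1) from by abel, pi_add_self, add_zero]) h24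
  have ca22 : ¬(U2 + U2 = U1 + U2) := cond_neg (by rw [pi_add_self, zero_add]) h12
  have ca23 : ¬(U2 + U3 = U1 + U2) := cond_neg (by rw [show U2 + U3 + (U1 + U2) = U1 + U3 + (U2 + U2) from by abel, pi_add_self, add_zero]) h13
  have ca24 : ¬(U2 + U4 = U1 + U2) := cond_neg (by rw [show U2 + U4 + (U1 + U2) = U1 + U4 + (U2 + U2) from by abel, pi_add_self, add_zero]) h14
  have ca31 : ¬(U3 + U1 = U1 + U2) := cond_neg (by rw [show U3 + U1 + (U1 + U2) = U2 + U3 + (U1 + U1) from by abel, pi_add_self, add_zero]) h23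
  have ca32 : ¬(U3 + U2 = U1 + U2) := cond_neg (by rw [show U3 + U2 + (U1 + U2) = U1 + U3 + (U2 + U2) from by abel, pi_add_self, add_zero]) h13
  have ca33 : ¬(U3 + U3 = U1 + U2) := cond_neg (by rw [pi_add_self, zero_add]) h12
  have ca34 : U3 + U4 = U1 + U2 := (pi_add_eq_zero_iff _ _).mp (by rw [show U3 + U4 + (U1 + U2) = U1 + U2 + (U3 + U4) from by abel]; exact key0)
  have ca41 : ¬(U4 + U1 = U1 + U2) := cond_neg (by rw [show U4 + U1 + (U1 + U2) = U2 + U4 + (U1 + U1) from by abel, pi_add_self, add_zero]) h24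
  have ca42 : ¬(U4 + U2 = U1 + U2) := cond_neg (by rw [show U4 + U2 + (U1 + U2) = U1 + U4 + (U2 + U2) from by abel, pi_add_self, add_zero]) h14
  have ca43 : U4 + U3 = U1 + U2 := (add_comm U4 U3).trans ca34
  have ca44 : ¬(U4 + U4 = U1 + U2) := cond_neg (by rw [pi_add_self, zero_add]) h12
  have caz : ¬(U1 + U2 = 0) := fun hh => h12 ((pi_add_eq_zero_iff _ _).mp hh)
  rw [if_neg ca11, if_pos rfl, if_neg ca13, if_neg ca14, if_pos (add_comm U2 U1), if_neg ca22, if_neg ca23, if_neg ca24, if_neg ca31, if_neg ca32, if_neg ca33, if_pos ca34, if_neg ca41, if_neg ca42, if_pos ca43, if_neg ca44, if_neg caz] at he12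
  have e12 : α1 * α2 + α3 * α4 = 0 := by linear_combination he12 / 2
  have he13 := hg (U1 + U3)
  have cb11 : ¬(U1 + U1 = U1 + U3) := cond_neg (by rw [pi_add_self, zero_add]) h13
  have cb12 : ¬(U1 + U2 = U1 + U3) := cond_neg (by rw [show U1 + U2 + (U1 + U3) = U2 + U3 + (U1 + U1) from by abel, pi_add_self, add_zero]) h23
  have cb14 : ¬(U1 + U4 = U1 + U3) := cond_neg (by rw [show U1 + U4 + (U1 + U3) = U3 + U4 + (U1 + U1) from by abel, pi_add_self, add_zero]) h34
  have cb21 : ¬(U2 + U1 = U1 + U3) := cond_neg (by rw [show U2 + U1 + (U1 + U3) = U2 + U3 + (U1 + U1) from by abel, pi_add_self, add_zero]) h23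
  have cb22 : ¬(U2 + U2 = U1 + U3) := cond_neg (by rw [pi_add_self, zero_add]) h13
  have cb23 : ¬(U2 + U3 = U1 + U3) := cond_neg (by rw [show U2 + U3 + (U1 + U3) = U1 + U2 + (U3 + U3) from by abel, pi_add_self, add_zero]) h12
  have cb24 : U2 + U4 = U1 + U3 := (pi_add_eq_zero_iff _ _).mp (by rw [show U2 + U4 + (U1 + U3) = U1 + U2 + (U3 + U4) from by abel]; exact key0)
  have cb32 : ¬(U3 + U2 = U1 + U3) := cond_neg (by rw [show U3 + U2 + (U1 + U3) = U1 + U2 + (U3 + U3) from by abel, pi_add_self, add_zero]) h12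
  have cb33 : ¬(U3 + U3 = U1 + U3) := cond_neg (by rw [pi_add_self, zero_add]) h13
  have cb34 : ¬(U3 + U4 = U1 + U3) := cond_neg (by rw [show U3 + U4 + (U1 + U3) = U1 + U4 + (U3 + U3) from by abel, pi_add_self, add_zero]) h14
  have cb41 : ¬(U4 + U1 = U1 + U3) := cond_neg (by rw [show U4 + U1 + (U1 + U3) = U3 + U4 + (U1 + U1) from by abel, pi_add_self, add_zero]) h34
  have cb42 : U4 + U2 = U1 + U3 := (add_comm U4 U2).trans cb24
  have cb43 : ¬(U4 + U3 = U1 + U3) := cond_neg (by rw [show U4 + U3 + (U1 + U3) = U1 + U4 + (U3 + U3) from by abel, pi_add_self, add_zero]) h14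
  have cb44 : ¬(U4 + U4 = U1 + U3) := cond_neg (by rw [pi_add_self, zero_add]) h13
  have cbz : ¬(U1 + U3 = 0) := fun hh => h13 ((pi_add_eq_zero_iff _ _).mp hh)
  rw [if_neg cb11, if_neg cb12, if_pos rfl, if_neg cb14, if_neg cb21, if_neg cb22, if_neg cb23, if_pos cb24, if_pos (add_comm U3 U1), if_neg cb32, if_neg cb33, if_neg cb34, if_neg cb41, if_pos cb42, if_neg cb43, if_neg cb44, if_neg cbz] at he13
  have e13 : α1 * α3 + α2 * α4 = 0 := by linear_combination he13 / 2
  have he14 := hg (U1 + U4)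
  have cc11 : ¬(U1 + U1 = U1 + U4) := cond_neg (by rw [pi_add_self, zero_add]) h14
  have cc12 : ¬(U1 + U2 = U1 + U4) := cond_neg (by rw [show U1 + U2 + (U1 + U4) = U2 + U4 + (U1 + U1) from by abel, pi_add_self, add_zero]) h24
  have cc13 : ¬(U1 + U3 = U1 + U4) := cond_neg (by rw [show U1 + U3 + (U1 + U4) = U3 + U4 + (U1 + U1) from by abel, pi_add_self, add_zero]) h34
  have cc21 : ¬(U2 + U1 = U1 + U4) := cond_neg (by rw [show U2 + U1 + (U1 + U4) = U2 + U4 + (U1 + U1) from by abel, pi_add_self, add_zero]) h24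
  have cc22 : ¬(U2 + U2 = U1 + U4) := cond_neg (by rw [pi_add_self, zero_add]) h14
  have cc23 : U2 + U3 = U1 + U4 := (pi_add_eq_zero_iff _ _).mp (by rw [show U2 + U3 + (U1 + U4) = U1 + U2 + (U3 + U4) from by abel]; exact key0)
  have cc24 : ¬(U2 + U4 = U1 + U4) := cond_neg (by rw [show U2 + U4 + (U1 + U4) = U1 + U2 + (U4 + U4) from by abel, pi_add_self, add_zero]) h12
  have cc31 : ¬(U3 + U1 = U1 + U4) := cond_neg (by rw [show U3 + U1 + (U1 + U4) = U3 + U4 + (U1 + U1) from by abel, pi_add_self, add_zero]) h34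
  have cc32 : U3 + U2 = U1 + U4 := (add_comm U3 U2).trans cc23
  have cc33 : ¬(U3 + U3 = U1 + U4) := cond_neg (by rw [pi_add_self, zero_add]) h14
  have cc34 : ¬(U3 + U4 = U1 + U4) := cond_neg (by rw [show U3 + U4 + (U1 + U4) = U1 + U3 + (U4 + U4) from by abel, pi_add_self, add_zero]) h13
  have cc42 : ¬(U4 + U2 = U1 + U4) := cond_neg (by rw [show U4 + U2 + (U1 + U4) = U1 + U2 + (U4 + U4) from by abel, pi_add_self, add_zero]) h12
  have cc43 : ¬(U4 + U3 = U1 + U4) := cond_neg (by rw [show U4 + U3 + (U1 + U4) = U1 + U3 + (U4 + U4) from by abel, pi_add_self, add_zero]) h13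
  have cc44 : ¬(U4 + U4 = U1 + U4) := cond_neg (by rw [pi_add_self, zero_add]) h14
  have ccz : ¬(U1 + U4 = 0) := fun hh => h14 ((pi_add_eq_zero_iff _ _).mp hh)
  rw [if_neg cc11, if_neg cc12, if_neg cc13, if_pos rfl, if_neg cc21, if_neg cc22, if_pos cc23, if_neg cc24, if_neg cc31, if_pos cc32, if_neg cc33, if_neg cc34, if_pos (add_comm U4 U1), if_neg cc42, if_neg cc43, if_neg cc44, if_neg ccz] at he14
  have e14 : α1 * α4 + α2 * α3 = 0 := by linear_combination he14 / 2
  have esq : α1 * α1 + α2 * α2 + α3 * α3 + α4 * α4 = 1 := by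
    have hz0 := hg (0 : Fin n → ZMod 2)
    have cz12 : ¬(U1 + U2 = 0) := fun hh => h12 ((pi_add_eq_zero_iff _ _).mp hh)
    have cz13 : ¬(U1 + U3 = 0) := fun hh => h13 ((pi_add_eq_zero_iff _ _).mp hh)
    have cz14 : ¬(U1 + U4 = 0) := fun hh => h14 ((pi_add_eq_zero_iff _ _).mp hh)
    have cz21 : ¬(U2 + U1 = 0) := fun hh => (Ne.symm h12) ((pi_add_eq_zero_iff _ _).mp hh)
    have cz23 : ¬(U2 + U3 = 0) := fun hh => h23 ((pi_add_eq_zero_iff _ _).mp hh)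
    have cz24 : ¬(U2 + U4 = 0) := fun hh => h24 ((pi_add_eq_zero_iff _ _).mp hh)
    have cz31 : ¬(U3 + U1 = 0) := fun hh => (Ne.symm h13) ((pi_add_eq_zero_iff _ _).mp hh)
    have cz32 : ¬(U3 + U2 = 0) := fun hh => (Ne.symm h23) ((pi_add_eq_zero_iff _ _).mp hh)
    have cz34 : ¬(U3 + U4 = 0) := fun hh => h34 ((pi_add_eq_zero_iff _ _).mp hh)
    have cz41 : ¬(U4 + U1 = 0) := fun hh => (Ne.symm h14) ((pi_add_eq_zero_iff _ _).mp hh)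
    have cz42 : ¬(U4 + U2 = 0) := fun hh => (Ne.symm h24) ((pi_add_eq_zero_iff _ _).mp hh)
    have cz43 : ¬(U4 + U3 = 0) := fun hh => (Ne.symm h34) ((pi_add_eq_zero_iff _ _).mp hh)
    rw [if_pos (pi_add_self U1), if_neg cz12, if_neg cz13, if_neg cz14, if_neg cz21, if_pos (pi_add_self U2), if_neg cz23, if_neg cz24, if_neg cz31, if_neg cz32, if_pos (pi_add_self U3), if_neg cz34, if_neg cz41, if_neg cz42, if_neg cz43, if_pos (pi_add_self U4), if_pos rfl] at hz0
    linear_combination hz0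
  have q12 : α1 * α1 = α2 * α2 := by
    rcases mul_eq_zero.mp (show α3 * (α1 * α1 - α2 * α2) = 0 by
      linear_combination α1 * e13 - α2 * e14) with h | h
    · exact absurd h hα3
    · linarith
  have q13 : α1 * α1 = α3 * α3 := by
    rcases mul_eq_zero.mp (show α2 * (α1 * α1 - α3 * α3) = 0 by
      linear_combination α1 * e12 - α3 * e14) with h | h
    · exact absurd h hα2
    · linarith
  have q14 : α1 * α1 = α4 * α4 := by
    rcases mul_eq_zero.mp (show α2 * (α1 * α1 - α4 * α4) = 0 by
      linear_combination α1 * e12 - α4 * e13) with h | h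
    · exact absurd h hα2
    · linarith
  have s1 : α1 = 1/2 ∨ α1 = -(1/2) := by
    rcases mul_eq_zero.mp (show (2*α1 - 1) * (2*α1 + 1) = 0 by
      linear_combination esq + q12 + q13 + q14) with h | h
    · left; linarith
    · right; linarith
  have s2 : α2 = 1/2 ∨ α2 = -(1/2) := by
    rcases mul_eq_zero.mp (show (2*α2 - 1) * (2*α2 + 1) = 0 by
      linear_combination esq - 3*q12 + q13 + q14) with h | h
    · left; linarith
    · right; linarith
  have s3 : α3 = 1/2 ∨ α3 = -(1/2) := by
    rcases mul_eq_zero.mp (show (2*α3 - 1) * (2*α3 + 1) = 0 by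
      linear_combination esq + q12 - 3*q13 + q14) with h | h
    · left; linarith
    · right; linarith
  have s4 : α4 = 1/2 ∨ α4 = -(1/2) := by
    rcases mul_eq_zero.mp (show (2*α4 - 1) * (2*α4 + 1) = 0 by
      linear_combination esq + q12 + q13 - 3*q14) with h | h
    · left; linarith
    · right; linarith
  rcases s1 with v1 | v1 <;> rcases s2 with v2 | v2 <;> rcases s3 with v3 | v3 <;>
      rcases s4 with v4 | v4 <;>
  first
    | (exfalso; rw [v1, v2, v3, v4] at esum; norm_num at esum; done)
    | (refine stmt11_aux S hSmul C U2 U3 U4 U1 h23 (Ne.symm h12) (Ne.symm h13)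
        (by rw [show U2 + U3 + U4 + U1 = U1 + U2 + (U3 + U4) from by abel]; exact key0)
        A (by rw [hA, v1, v2, v3, v4]; module)
        (fun i => by have h := heps i; rw [v1, v2, v3, v4] at h; linarith))
    | (refine stmt11_aux S hSmul C U1 U3 U4 U2 h13 h12 (Ne.symm h23)
        (by rw [show U1 + U3 + U4 + U2 = U1 + U2 + (U3 + U4) from by abel]; exact key0)
        A (by rw [hA, v1, v2, v3, v4]; module)
        (fun i => by have h := heps i; rw [v1, v2, v3, v4] at h; linarith))
    | (refine stmt11_aux S hSmul C U1 U2 U4 U3 h12 h13 h23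
        (by rw [show U1 + U2 + U4 + U3 = U1 + U2 + (U3 + U4) from by abel]; exact key0)
        A (by rw [hA, v1, v2, v3, v4]; module)
        (fun i => by have h := heps i; rw [v1, v2, v3, v4] at h; linarith))
    | (refine stmt11_aux S hSmul C U1 U2 U3 U4 h12 h14 h24
        (by rw [show U1 + U2 + U3 + U4 = U1 + U2 + (U3 + U4) from by abel]; exact key0)
        A (by rw [hA, v1, v2, v3, v4]; module)
        (fun i => by have h := heps i; rw [v1, v2, v3, v4] at h; linarith))
end

section
/- Assume ψ ≠ 0, each W i is invertible, and there is an index i0 with C i0 = 0 and W i0 = 1. Fix V, V1, V2 ∈ (Fin n → ZMod 2) with V1 ≠ V2, V1 ≠ 0, V2 ≠ 0, and set A := S V * T V1 V2. Then the following are equivalent: (i) A can be used as a decoding observable, i.e., for every e : Fin m there exists ε ∈ {1, −1} ⊆ ℝ such that A (E e (W i ψ)) = ε • (E e (W i ψ)) for all i : Fin K; (ii) for every e : Fin m and every i : Fin K, ⟨C i, V + F e⟩ = p i (i.e., V + F e solves the linear system ⟨C i, ·⟩ = p i). -/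
private def sgn (x : ZMod 2) : ℝ := if x = 0 then 1 else -1

private lemma two_cases : ∀ a : ZMod 2, a = 0 ∨ a = 1 := by decide

private lemma zm2 : (1 : ZMod 2) + 1 = 0 := by decide

private lemma sgn_add (a b : ZMod 2) : sgn (a + b) = sgn a * sgn b := by
  rcases two_cases a with rfl|rfl <;> rcases two_cases b with rfl|rfl <;>
    simp [sgn, zm2]

private lemma sgn_comb (a b : ZMod 2) :
    (1/2 : ℝ) * (-1 + sgn a + sgn b + sgn a * sgn b) = sgn (a + b + a*b) := by
  rcases two_cases a with rfl|rfl <;> rcases two_cases b with rfl|rfl <;>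
    simp [sgn, zm2] <;> norm_num

private lemma sgn_inj (a b : ZMod 2) (h : sgn a = sgn b) : a = b := by
  rcases two_cases a with rfl|rfl <;> rcases two_cases b with rfl|rfl <;>
    simp [sgn] at h ⊢ <;> norm_num at h

private lemma sgn_sq (a : ZMod 2) : sgn a * sgn a = 1 := by
  rcases two_cases a with rfl|rfl <;> norm_num [sgn]

private def ip {n : ℕ} (x y : Fin n → ZMod 2) : ZMod 2 := ∑ k, x k * y k

private lemma ip_add_right {n : ℕ} (x y z : Fin n → ZMod 2) :
    ip x (y + z) = ip x y + ip x z := by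
  simp [ip, mul_add, Finset.sum_add_distrib]

private lemma ip_smul_right {n : ℕ} (a : ZMod 2) (x y : Fin n → ZMod 2) :
    ip x (a • y) = a * ip x y := by
  simp [ip, Finset.mul_sum, mul_left_comm]

private lemma ip_zero_left {n : ℕ} (y : Fin n → ZMod 2) : ip 0 y = 0 := by
  simp [ip]

private lemma zkey : ∀ a b e1 e2 c1 c2 : ZMod 2,
    (a+b) + ((e1+c1)+(e2+c2)+(e1+c1)*(e2+c2)) =
      ((a+0) + ((e1+0)+(e2+0)+(e1+0)*(e2+0))) +
        ((b + (e2*c1 + e1*c2)) + (if c1 = 0 ∧ c2 = 0 then 0 else 1)) := by decide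

private lemma zadd : ∀ x y : ZMod 2, x + y = 0 → x = y := by decide

private lemma zself : ∀ x : ZMod 2, x + x = 0 := by decide

theorem stmt_12 {n K m : ℕ} (hn : 1 ≤ n) (hK : 1 ≤ K) (hm : 1 ≤ m)
    {H : Type*} [AddCommGroup H] [Module ℂ H]
    (S : (Fin n → ZMod 2) → Module.End ℂ H)
    (hS0 : S 0 = 1)
    (hSmul : ∀ U V : Fin n → ZMod 2, S (U + V) = S U * S V)
    (ψ : H) (hψ : ∀ V : Fin n → ZMod 2, S V ψ = ψ) (hψ0 : ψ ≠ 0)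
    (C : Fin K → (Fin n → ZMod 2))
    (W : Fin K → Module.End ℂ H)
    (hW : ∀ (i : Fin K) (V : Fin n → ZMod 2),
      W i * S V = (if (∑ k, C i k * V k) = 0 then (1 : ℝ) else -1) • (S V * W i))
    (hWinv : ∀ i : Fin K, IsUnit (W i))
    (i0 : Fin K) (hC0 : C i0 = 0) (hW0 : W i0 = 1)
    (E : Fin m → Module.End ℂ H)
    (hEinv : ∀ e : Fin m, IsUnit (E e))
    (u : Fin m → (Fin n → ZMod 2))
    (hE : ∀ (e : Fin m) (V : Fin n → ZMod 2),
      E e * S V = (if (∑ k, u e k * V k) = 0 then (1 : ℝ) else -1) • (S V * E e))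
    (V V1 V2 : Fin n → ZMod 2)
    (hV12 : V1 ≠ V2) (hV1 : V1 ≠ 0) (hV2 : V2 ≠ 0)
    (p : Fin K → ZMod 2)
    (hp : ∀ i : Fin K,
      p i = if (∑ k, C i k * V1 k) = 0 ∧ (∑ k, C i k * V2 k) = 0 then 0 else 1)
    (F : Fin m → (Fin n → ZMod 2))
    (hF : ∀ e : Fin m,
      F e = (∑ k, u e k * V2 k) • V1 + (∑ k, u e k * V1 k) • V2)
    (A : Module.End ℂ H)
    (hA : A = S V * ((1 / 2 : ℝ) • (-1 + S V1 + S V2 + S (V1 + V2)))) :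
    (∀ e : Fin m, ∃ ε : ℝ, (ε = 1 ∨ ε = -1) ∧
        ∀ i : Fin K, A (E e (W i ψ)) = ε • (E e (W i ψ))) ↔
      (∀ (e : Fin m) (i : Fin K), (∑ k, C i k * (V + F e) k) = p i) := by
  have hW' : ∀ (i : Fin K) (V' : Fin n → ZMod 2),
      W i * S V' = sgn (ip (C i) V') • (S V' * W i) := hW
  have hE' : ∀ (e : Fin m) (V' : Fin n → ZMod 2),
      E e * S V' = sgn (ip (u e) V') • (S V' * E e) := hE
  have hp' : ∀ i : Fin K,
      p i = if ip (C i) V1 = 0 ∧ ip (C i) V2 = 0 then 0 else 1 := hp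
  have hF' : ∀ e : Fin m,
      F e = ip (u e) V2 • V1 + ip (u e) V1 • V2 := hF
  -- commutation at the vector level
  have hvec : ∀ (e : Fin m) (i : Fin K) (V' : Fin n → ZMod 2),
      S V' (E e (W i ψ)) = sgn (ip (u e) V' + ip (C i) V') • (E e (W i ψ)) := by
    intro e i V'
    have h1 : W i (S V' ψ) = sgn (ip (C i) V') • (S V' (W i ψ)) := by
      have := congrArg (fun L : Module.End ℂ H => L ψ) (hW' i V')
      simpa using this
    rw [hψ V'] at h1
    have h2 : S V' (W i ψ) = sgn (ip (C i) V') • (W i ψ) := by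
      conv_rhs => rw [h1]
      rw [smul_smul, sgn_sq, one_smul]
    have h3 := congrArg (fun L : Module.End ℂ H => L (W i ψ)) (hE' e V')
    simp only [Module.End.mul_apply, LinearMap.smul_apply] at h3
    rw [h2, (E e).map_smul_of_tower] at h3
    rw [sgn_add, ← smul_smul]
    calc S V' (E e (W i ψ))
        = (sgn (ip (u e) V') * sgn (ip (u e) V')) • S V' (E e (W i ψ)) := by
          rw [sgn_sq, one_smul]
      _ = sgn (ip (u e) V') • (sgn (ip (u e) V') • S V' (E e (W i ψ))) := by
          rw [smul_smul]
      _ = sgn (ip (u e) V') • (sgn (ip (C i) V') • E e (W i ψ)) := by rw [← h3]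
  -- nonvanishing
  have hne : ∀ (e : Fin m) (i : Fin K), E e (W i ψ) ≠ 0 := by
    intro e i h
    have hEinj := ((Module.End.isUnit_iff (E e)).mp (hEinv e)).injective
    have hWinj := ((Module.End.isUnit_iff (W i)).mp (hWinv i)).injective
    exact hψ0 (hWinj (by simpa using hEinj (by simpa using h)))
  -- eigenvalue computation
  have heig : ∀ (e : Fin m) (i : Fin K),
      A (E e (W i ψ)) =
        sgn ((ip (u e) V + ip (C i) V) +
          ((ip (u e) V1 + ip (C i) V1) + (ip (u e) V2 + ip (C i) V2) +
            (ip (u e) V1 + ip (C i) V1) * (ip (u e) V2 + ip (C i) V2))) •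
          (E e (W i ψ)) := by
    intro e i
    have e1 := hvec e i V1
    have e2 := hvec e i V2
    have eV := hvec e i V
    have e12 : S (V1 + V2) (E e (W i ψ)) =
        (sgn (ip (u e) V1 + ip (C i) V1) * sgn (ip (u e) V2 + ip (C i) V2)) •
          (E e (W i ψ)) := by
      rw [hvec e i (V1 + V2), ip_add_right, ip_add_right,
        show ip (u e) V1 + ip (u e) V2 + (ip (C i) V1 + ip (C i) V2) =
            (ip (u e) V1 + ip (C i) V1) + (ip (u e) V2 + ip (C i) V2) by ring,
        sgn_add]
    rw [hA]
    simp only [Module.End.mul_apply, LinearMap.smul_apply, LinearMap.add_apply,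
      LinearMap.neg_apply, Module.End.one_apply]
    rw [e1, e2, e12]
    have hcomb : -(E e (W i ψ)) + sgn (ip (u e) V1 + ip (C i) V1) • (E e (W i ψ))
          + sgn (ip (u e) V2 + ip (C i) V2) • (E e (W i ψ))
          + (sgn (ip (u e) V1 + ip (C i) V1) * sgn (ip (u e) V2 + ip (C i) V2)) • (E e (W i ψ))
        = ((-1 : ℝ) + sgn (ip (u e) V1 + ip (C i) V1) + sgn (ip (u e) V2 + ip (C i) V2)
            + sgn (ip (u e) V1 + ip (C i) V1) * sgn (ip (u e) V2 + ip (C i) V2)) • (E e (W i ψ)) := by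
      simp [add_smul, neg_smul]
    rw [hcomb, smul_smul, sgn_comb, (S V).map_smul_of_tower, eV, smul_smul,
      ← sgn_add, add_comm]
  -- the exponent identity
  have hipF : ∀ (e : Fin m) (i : Fin K),
      ip (C i) (V + F e) =
        ip (C i) V + (ip (u e) V2 * ip (C i) V1 + ip (u e) V1 * ip (C i) V2) := by
    intro e i
    rw [hF' e, ip_add_right, ip_add_right, ip_smul_right, ip_smul_right]
  have hexp : ∀ (e : Fin m) (i : Fin K),
      ((ip (u e) V + ip (C i) V) +
          ((ip (u e) V1 + ip (C i) V1) + (ip (u e) V2 + ip (C i) V2) +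
            (ip (u e) V1 + ip (C i) V1) * (ip (u e) V2 + ip (C i) V2)))
        = ((ip (u e) V + ip (C i0) V) +
          ((ip (u e) V1 + ip (C i0) V1) + (ip (u e) V2 + ip (C i0) V2) +
            (ip (u e) V1 + ip (C i0) V1) * (ip (u e) V2 + ip (C i0) V2)))
          + (ip (C i) (V + F e) + p i) := by
    intro e i
    rw [hipF e i, hp' i, hC0]
    simp only [ip_zero_left]
    exact zkey _ _ _ _ _ _
  -- scalar cancellation
  have cancel : ∀ (r s : ℝ) (x : H), x ≠ 0 → r • x = s • x → r = s := by
    intro r s x hx hrs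
    have h0 : (r - s) • x = 0 := by rw [sub_smul, hrs, sub_self]
    rcases smul_eq_zero.mp h0 with h | h
    · linarith [h]
    · exact absurd h hx
  constructor
  · intro h e i
    obtain ⟨ε, -, hall⟩ := h e
    have ei : sgn ((ip (u e) V + ip (C i) V) +
          ((ip (u e) V1 + ip (C i) V1) + (ip (u e) V2 + ip (C i) V2) +
            (ip (u e) V1 + ip (C i) V1) * (ip (u e) V2 + ip (C i) V2))) = ε :=
      cancel _ _ _ (hne e i) (by rw [← heig e i, hall i])
    have e0 : sgn ((ip (u e) V + ip (C i0) V) +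
          ((ip (u e) V1 + ip (C i0) V1) + (ip (u e) V2 + ip (C i0) V2) +
            (ip (u e) V1 + ip (C i0) V1) * (ip (u e) V2 + ip (C i0) V2))) = ε :=
      cancel _ _ _ (hne e i0) (by rw [← heig e i0, hall i0])
    have hEq := sgn_inj _ _ (ei.trans e0.symm)
    rw [hexp e i] at hEq
    have h0 : (0 : ZMod 2) = ip (C i) (V + F e) + p i := by
      apply add_left_cancel (a := (ip (u e) V + ip (C i0) V) +
          ((ip (u e) V1 + ip (C i0) V1) + (ip (u e) V2 + ip (C i0) V2) +
            (ip (u e) V1 + ip (C i0) V1) * (ip (u e) V2 + ip (C i0) V2)))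
      rw [add_zero]
      exact hEq.symm
    show ip (C i) (V + F e) = p i
    exact zadd _ _ h0.symm
  · intro h e
    refine ⟨sgn ((ip (u e) V + ip (C i0) V) +
          ((ip (u e) V1 + ip (C i0) V1) + (ip (u e) V2 + ip (C i0) V2) +
            (ip (u e) V1 + ip (C i0) V1) * (ip (u e) V2 + ip (C i0) V2))), ?_, ?_⟩
    · rcases two_cases ((ip (u e) V + ip (C i0) V) +
          ((ip (u e) V1 + ip (C i0) V1) + (ip (u e) V2 + ip (C i0) V2) +
            (ip (u e) V1 + ip (C i0) V1) * (ip (u e) V2 + ip (C i0) V2))) with h'|h'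
      · left; simp [sgn, h']
      · right; simp [sgn, h']
    · intro i
      rw [heig e i, hexp e i, show ip (C i) (V + F e) = p i from h e i, zself,
        add_zero]
end

section
/- Fix V, V1, V2 ∈ (Fin n → ZMod 2). Suppose S V1 and S V2 commute with every error, i.e., ⟨u e, V1⟩ = 0 and ⟨u e, V2⟩ = 0 for all e : Fin m, and suppose ⟨C i, V⟩ = p i for all i : Fin K. Then A := S V * T V1 V2 can be used as a decoding observable: for every e : Fin m there exists ε ∈ {1, −1} ⊆ ℝ such that A (E e (W i ψ)) = ε • (E e (W i ψ)) for all i : Fin K. -/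
theorem stmt_13 {n K m : ℕ} (hn : 1 ≤ n) (hK : 1 ≤ K) (hm : 1 ≤ m)
    {H : Type*} [AddCommGroup H] [Module ℂ H]
    (S : (Fin n → ZMod 2) → Module.End ℂ H)
    (hS0 : S 0 = 1)
    (hSmul : ∀ U V : Fin n → ZMod 2, S (U + V) = S U * S V)
    (ψ : H) (hψ : ∀ V : Fin n → ZMod 2, S V ψ = ψ)
    (C : Fin K → (Fin n → ZMod 2))
    (W : Fin K → Module.End ℂ H)
    (hW : ∀ (i : Fin K) (V : Fin n → ZMod 2),
      W i * S V = (if (∑ k, C i k * V k) = 0 then (1 : ℝ) else -1) • (S V * W i))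
    (E : Fin m → Module.End ℂ H)
    (u : Fin m → (Fin n → ZMod 2))
    (hE : ∀ (e : Fin m) (V : Fin n → ZMod 2),
      E e * S V = (if (∑ k, u e k * V k) = 0 then (1 : ℝ) else -1) • (S V * E e))
    (V V1 V2 : Fin n → ZMod 2)
    (p : Fin K → ZMod 2)
    (hp : ∀ i : Fin K,
      p i = if (∑ k, C i k * V1 k) = 0 ∧ (∑ k, C i k * V2 k) = 0 then 0 else 1)
    (hu1 : ∀ e : Fin m, (∑ k, u e k * V1 k) = 0)
    (hu2 : ∀ e : Fin m, (∑ k, u e k * V2 k) = 0)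
    (hCV : ∀ i : Fin K, (∑ k, C i k * V k) = p i)
    (A : Module.End ℂ H)
    (hA : A = S V * ((1 / 2 : ℝ) • (-1 + S V1 + S V2 + S (V1 + V2)))) :
    ∀ e : Fin m, ∃ ε : ℝ, (ε = 1 ∨ ε = -1) ∧
      ∀ i : Fin K, A (E e (W i ψ)) = ε • (E e (W i ψ)) := by
  intro e
  have sign_pm : ∀ P : Prop, ∀ _ : Decidable P,
      (if P then (1:ℝ) else -1) = 1 ∨ (if P then (1:ℝ) else -1) = -1 := by
    intro P hP; split <;> simp
  have flip : ∀ (c : ℝ) (X Y : Module.End ℂ H), (c = 1 ∨ c = -1) → X = c • Y → Y = c • X := by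
    rintro c X Y hc rfl
    rcases hc with rfl | rfl <;> simp [smul_smul]
  refine ⟨if (∑ k, u e k * V k) = 0 then 1 else -1, sign_pm _ _, ?_⟩
  intro i
  set φ := E e (W i ψ) with hφdef
  have key : ∀ V' : Fin n → ZMod 2, S V' φ =
      ((if (∑ k, u e k * V' k) = 0 then (1:ℝ) else -1) *
       (if (∑ k, C i k * V' k) = 0 then (1:ℝ) else -1)) • φ := by
    intro V'
    have h1 : S V' * E e
        = (if (∑ k, u e k * V' k) = 0 then (1:ℝ) else -1) • (E e * S V') :=
      flip _ _ _ (sign_pm _ _) (hE e V')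
    have h2 : S V' * W i
        = (if (∑ k, C i k * V' k) = 0 then (1:ℝ) else -1) • (W i * S V') :=
      flip _ _ _ (sign_pm _ _) (hW i V')
    have hmaps : S V' * (E e * W i)
        = ((if (∑ k, u e k * V' k) = 0 then (1:ℝ) else -1) *
           (if (∑ k, C i k * V' k) = 0 then (1:ℝ) else -1)) • (E e * W i * S V') := by
      rw [← mul_assoc, h1, smul_mul_assoc, mul_assoc, h2, mul_smul_comm, smul_smul, mul_assoc]
    have := LinearMap.congr_fun hmaps ψ
    simp only [Module.End.mul_apply, LinearMap.smul_apply, hψ V'] at this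
    exact this
  have hsum : ∀ x : Fin n → ZMod 2,
      (∑ k, x k * (V1 + V2) k) = (∑ k, x k * V1 k) + (∑ k, x k * V2 k) := by
    intro x
    simp [Pi.add_apply, mul_add, Finset.sum_add_distrib]
  set a := (∑ k, C i k * V1 k) with hadef
  set b := (∑ k, C i k * V2 k) with hbdef
  have k1 : S V1 φ = (if a = 0 then (1:ℝ) else -1) • φ := by
    simpa [hu1 e] using key V1
  have k2 : S V2 φ = (if b = 0 then (1:ℝ) else -1) • φ := by
    simpa [hu2 e] using key V2
  have k12 : S (V1 + V2) φ = (if a + b = 0 then (1:ℝ) else -1) • φ := by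
    have := key (V1 + V2)
    rw [hsum (u e), hsum (C i), hu1 e, hu2 e] at this
    simpa using this
  have zmodcases : ∀ x : ZMod 2, x = 0 ∨ x = 1 := by decide
  have hq : (if p i = 0 then (1:ℝ) else -1) = (if a = 0 ∧ b = 0 then (1:ℝ) else -1) := by
    rw [hp i, ← hadef, ← hbdef]
    by_cases h : a = 0 ∧ b = 0 <;> simp [h]
  have hT : ((1 / 2 : ℝ) • (-1 + S V1 + S V2 + S (V1 + V2)) : Module.End ℂ H) φ
      = (if a = 0 ∧ b = 0 then (1:ℝ) else -1) • φ := by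
    simp only [LinearMap.smul_apply, LinearMap.add_apply, LinearMap.neg_apply,
      Module.End.one_apply, k1, k2, k12]
    rcases zmodcases a with ha | ha <;> rcases zmodcases b with hb | hb <;>
      simp [ha, hb, show ((1 : ZMod 2) + 1) = 0 by decide,
        show ((1 : ZMod 2)) ≠ 0 by decide] <;> module
  have kV : S V φ = ((if (∑ k, u e k * V k) = 0 then (1:ℝ) else -1) *
      (if a = 0 ∧ b = 0 then (1:ℝ) else -1)) • φ := by
    rw [key V, hCV i, hq]
  rw [hA]
  show S V (((1 / 2 : ℝ) • (-1 + S V1 + S V2 + S (V1 + V2)) : Module.End ℂ H) φ) = _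
  rw [hT, LinearMap.map_smul_of_tower, kV, smul_smul]
  congr 1
  by_cases h : a = 0 ∧ b = 0 <;> by_cases h' : (∑ k, u e k * V k) = 0 <;>
    simp [h, h'] <;> ring
end

section
/- Fix V ∈ (Fin n → ZMod 2) with ⟨C i, V⟩ = 0 for all i : Fin K (i.e., S V lies in the normalizer of the codeword operators inside the stabilizer). Then for every e : Fin m and every i : Fin K, (S V) (E e (W i ψ)) = (−1)^{⟨u e, V⟩} • (E e (W i ψ)); in particular S V can be used as a decoding observable, since for each fixed e the vectors E e (W i ψ) all lie in a single eigenspace of S V. -/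
theorem stmt_14 {n K m : ℕ} (hn : 1 ≤ n) (hK : 1 ≤ K) (hm : 1 ≤ m)
    {H : Type*} [AddCommGroup H] [Module ℂ H]
    (S : (Fin n → ZMod 2) → Module.End ℂ H)
    (hS0 : S 0 = 1)
    (hSmul : ∀ U V : Fin n → ZMod 2, S (U + V) = S U * S V)
    (ψ : H) (hψ : ∀ V : Fin n → ZMod 2, S V ψ = ψ)
    (C : Fin K → (Fin n → ZMod 2))
    (W : Fin K → Module.End ℂ H)
    (hW : ∀ (i : Fin K) (V : Fin n → ZMod 2),
      W i * S V = (if (∑ k, C i k * V k) = 0 then (1 : ℝ) else -1) • (S V * W i))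
    (E : Fin m → Module.End ℂ H)
    (u : Fin m → (Fin n → ZMod 2))
    (hE : ∀ (e : Fin m) (V : Fin n → ZMod 2),
      E e * S V = (if (∑ k, u e k * V k) = 0 then (1 : ℝ) else -1) • (S V * E e))
    (V : Fin n → ZMod 2)
    (hCV : ∀ i : Fin K, (∑ k, C i k * V k) = 0) :
    ∀ (e : Fin m) (i : Fin K),
      (S V) (E e (W i ψ)) =
        (if (∑ k, u e k * V k) = 0 then (1 : ℝ) else -1) • (E e (W i ψ)) := by
  intro e i
  set c : ℝ := if (∑ k, u e k * V k) = 0 then (1 : ℝ) else -1 with hc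
  have hcc : c * c = 1 := by rw [hc]; split <;> norm_num
  -- S V (W i ψ) = W i ψ
  have hWψ : S V (W i ψ) = W i ψ := by
    have h := hW i V
    rw [hCV i, if_pos rfl, one_smul] at h
    have := congrArg (fun f : Module.End ℂ H => f ψ) h
    simp only [Module.End.mul_apply] at this
    rw [← this, hψ]
  have h := congrArg (fun f : Module.End ℂ H => f (W i ψ)) (hE e V)
  simp only [Module.End.mul_apply, LinearMap.smul_apply] at h
  rw [hWψ, ← hc] at h
  calc S V (E e (W i ψ)) = (c * c) • S V (E e (W i ψ)) := by rw [hcc, one_smul]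
    _ = c • (c • S V (E e (W i ψ))) := by rw [mul_smul]
    _ = c • E e (W i ψ) := by rw [← h]
end
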